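/- arXiv:2304.10980 — 7 statements merged into one kernel-verified Lean document; each statement's English description precedes it below -/
import Mathlib

section
/- Let A = [[a,b],[c,d]] ∈ SL₂(ℤ) with c ≠ 0 and |a + d| > 2. Then the open disks D(A) = B(a/c, 1/|c|) and D(A⁻¹) = B(-d/c, 1/|c|) are disjoint, and for any z ∈ ℍ with z not in the closure of D(A⁻¹), we have Az ∈ D(A). -/
/-- If `A = [[a,b],[c,d]] ∈ SL₂(ℤ)` with `c ≠ 0` and `|a + d| > 2`, then
the open disks `D(A) = B(a/c, 1/|c|)` and `D(A⁻¹) = B(-d/c, 1/|c|)` are disjoint, and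
for `z ∈ ℍ` outside the closure of `D(A⁻¹)` we have `Az ∈ D(A)`. -/
theorem stmt2 (a b c d : ℤ) (hdet : a * d - b * c = 1) (hc : c ≠ 0)
    (htr : |a + d| > 2) :
    Disjoint (Metric.ball ((a : ℂ) / (c : ℂ)) (1 / |(c : ℝ)|))
        (Metric.ball (-(d : ℂ) / (c : ℂ)) (1 / |(c : ℝ)|)) ∧
      ∀ z : ℂ, 0 < z.im →
        z ∉ Metric.closedBall (-(d : ℂ) / (c : ℂ)) (1 / |(c : ℝ)|) →
        ((a : ℂ) * z + (b : ℂ)) / ((c : ℂ) * z + (d : ℂ))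
          ∈ Metric.ball ((a : ℂ) / (c : ℂ)) (1 / |(c : ℝ)|) := by
  have hcC : (c : ℂ) ≠ 0 := by exact_mod_cast Int.cast_ne_zero.mpr hc
  have hcR : (0 : ℝ) < |(c : ℝ)| := abs_pos.mpr (by exact_mod_cast hc)
  have hdetC : (a : ℂ) * d - b * c = 1 := by exact_mod_cast hdet
  constructor
  · apply Metric.ball_disjoint_ball
    rw [Complex.dist_eq]
    have h1 : (a : ℂ) / c - -(d : ℂ) / c = ((a + d : ℤ) : ℂ) / c := by
      push_cast; field_simp; ring
    rw [h1, norm_div, Complex.norm_intCast]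
    have hcc : ‖(c : ℂ)‖ = |(c : ℝ)| := by
      rw [show ((c : ℤ) : ℂ) = ((c : ℝ) : ℂ) by push_cast; rfl, Complex.norm_real, Real.norm_eq_abs]
    rw [hcc, ← add_div]
    have h3 : (2 : ℝ) < |((a + d : ℤ) : ℝ)| := by exact_mod_cast htr
    gcongr
    linarith
  · intro z hz hball
    have hd : 1 / |(c : ℝ)| < dist z (-(d : ℂ) / c) :=
      lt_of_not_ge fun h => hball (Metric.mem_closedBall.mpr h)
    have hdist : dist z (-(d : ℂ) / c) = ‖(c : ℂ) * z + d‖ / |(c : ℝ)| := by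
      rw [Complex.dist_eq, show z - -(d : ℂ) / c = ((c : ℂ) * z + d) / c by
        field_simp; ring, norm_div]
      congr 1
      rw [show ((c : ℤ) : ℂ) = ((c : ℝ) : ℂ) by push_cast; rfl, Complex.norm_real, Real.norm_eq_abs]
    rw [hdist] at hd
    have habs : 1 < ‖(c : ℂ) * z + d‖ := by
      rw [div_lt_div_iff₀ hcR hcR] at hd
      nlinarith
    have hnz : (c : ℂ) * z + d ≠ 0 := by
      intro h; rw [h] at habs; simp at habs; linarith
    have key : ((a : ℂ) * z + b) / ((c : ℂ) * z + d) - (a : ℂ) / c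
        = -(1 / ((c : ℂ) * ((c : ℂ) * z + d))) := by
      have hnz' : z * (c : ℂ) + d ≠ 0 := by rwa [mul_comm]
      field_simp
      linear_combination (-1 : ℂ) * hdetC
    rw [Metric.mem_ball, Complex.dist_eq, key]
    rw [norm_neg, norm_div, norm_one, norm_mul]
    rw [show ‖(c : ℂ)‖ = |(c : ℝ)| by
      rw [show ((c : ℤ) : ℂ) = ((c : ℝ) : ℂ) by push_cast; rfl, Complex.norm_real, Real.norm_eq_abs]]
    rw [div_lt_div_iff₀ (by positivity) hcR]
    nlinarith
end

section
/- Let A₁, ..., A_s ∈ SL₂(ℤ), each with nonzero lower-left entry, such that for every i ≠ j the four closed disks closure(D(A_i)), closure(D(A_i⁻¹)), closure(D(A_j)), closure(D(A_j⁻¹)) are pairwise disjoint, and for each i the closed disks closure(D(A_i)) and closure(D(A_i⁻¹)) are disjoint. Then A₁, ..., A_s freely generate a free subgroup of SL₂(ℤ); that is, no nonempty reduced word in A₁^{±1}, ..., A_s^{±1} equals the identity matrix. -/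
/-- The half-disk `D(A)` (as a full open disk in `ℂ`) attached to `A ∈ SL₂(ℤ)`:
the ball of center `a/c` and radius `1/|c|`. -/
def pingDisk (A : Matrix.SpecialLinearGroup (Fin 2) ℤ) : Set ℂ :=
  Metric.ball (((A.1 0 0 : ℤ) : ℂ) / ((A.1 1 0 : ℤ) : ℂ)) (1 / |((A.1 1 0 : ℤ) : ℝ)|)

open UpperHalfPlane ModularGroup Matrix.SpecialLinearGroup in
lemma ping_coe_smul (g : Matrix.SpecialLinearGroup (Fin 2) ℤ) (z : ℍ) :
    ((g • z : ℍ) : ℂ) = ((g.1 0 0 : ℂ) * z + g.1 0 1) / ((g.1 1 0 : ℂ) * z + g.1 1 1) := by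
  rw [sl_moeb, coe_smul]
  simp [num, denom, coe_apply_complex, σ]

open Matrix.SpecialLinearGroup in
lemma ping_inv_entries (g : Matrix.SpecialLinearGroup (Fin 2) ℤ) :
    ((g⁻¹).1 0 0) = g.1 1 1 ∧ ((g⁻¹).1 1 0) = -g.1 1 0 := by
  rw [SL2_inv_expl]
  exact ⟨rfl, rfl⟩

lemma ping_det (g : Matrix.SpecialLinearGroup (Fin 2) ℤ) :
    (g.1 0 0 : ℂ) * g.1 1 1 - g.1 0 1 * g.1 1 0 = 1 := by
  have h := g.2
  rw [Matrix.det_fin_two] at h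
  exact_mod_cast congrArg (Int.cast : ℤ → ℂ) h

lemma ping_helper (a b c d z : ℂ) (hc : c ≠ 0) (hdet : a * d - b * c = 1)
    (hdz : c * z + d ≠ 0) :
    (a * z + b) / (c * z + d) - a / c = -1 / ((c * z + d) * c) := by
  rw [div_sub_div _ _ hdz hc]
  congr 1
  linear_combination -hdet

/-- The key ping-pong step: if `z ∈ ℍ` is outside the closed disk of `g⁻¹`, then
`g • z` is inside the open disk of `g`. -/
lemma ping_step (g : Matrix.SpecialLinearGroup (Fin 2) ℤ) (hg : g.1 1 0 ≠ 0) (z : UpperHalfPlane)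
    (hz : (z : ℂ) ∉ closure (pingDisk g⁻¹)) : ((g • z : UpperHalfPlane) : ℂ) ∈ pingDisk g := by
  obtain ⟨h00, h10⟩ := ping_inv_entries g
  have hcR : (0 : ℝ) < |((g.1 1 0 : ℤ) : ℝ)| := by
    simp only [abs_pos, ne_eq, Int.cast_eq_zero]; exact hg
  have hcC : ((g.1 1 0 : ℤ) : ℂ) ≠ 0 := by exact_mod_cast hg
  have habs : ‖((g.1 1 0 : ℤ) : ℂ)‖ = |((g.1 1 0 : ℤ) : ℝ)| := by
    exact_mod_cast Complex.norm_intCast _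
  -- unfold the hypothesis
  have hclos : closure (pingDisk g⁻¹) =
      Metric.closedBall (((g.1 1 1 : ℤ) : ℂ) / (-((g.1 1 0 : ℤ) : ℂ)))
        (1 / |((g.1 1 0 : ℤ) : ℝ)|) := by
    unfold pingDisk
    rw [h00, h10]
    push_cast
    rw [abs_neg, closure_ball _ (one_div_ne_zero (ne_of_gt hcR))]
  rw [hclos, Metric.mem_closedBall, not_le, Complex.dist_eq] at hz
  have hdenom : 1 < ‖((g.1 1 0 : ℤ) : ℂ) * z + ((g.1 1 1 : ℤ) : ℂ)‖ := by
    have hrw : (z : ℂ) - ((g.1 1 1 : ℤ) : ℂ) / (-((g.1 1 0 : ℤ) : ℂ)) =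
        (((g.1 1 0 : ℤ) : ℂ) * z + ((g.1 1 1 : ℤ) : ℂ)) / ((g.1 1 0 : ℤ) : ℂ) := by
      rw [div_neg, sub_neg_eq_add, eq_div_iff hcC, add_mul, div_mul_cancel₀ _ hcC]
      ring
    rw [hrw, norm_div, habs, div_lt_div_iff₀ hcR hcR] at hz
    nlinarith
  have hdz : ((g.1 1 0 : ℤ) : ℂ) * (z : ℂ) + ((g.1 1 1 : ℤ) : ℂ) ≠ 0 := by
    intro h
    rw [h, norm_zero] at hdenom
    exact absurd hdenom (by norm_num)
  -- the image
  rw [ping_coe_smul]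
  unfold pingDisk
  rw [Metric.mem_ball, Complex.dist_eq,
    ping_helper _ _ _ _ _ hcC (ping_det g) hdz,
    norm_div, norm_neg, norm_one, norm_mul, habs,
    div_lt_div_iff₀ (by positivity) hcR]
  nlinarith [norm_nonneg (((g.1 1 0 : ℤ) : ℂ) * (z : ℂ) + ((g.1 1 1 : ℤ) : ℂ))]

/-- Base point `2i` lies outside every closed ping disk. -/
lemma ping_base (g : Matrix.SpecialLinearGroup (Fin 2) ℤ) (hg : g.1 1 0 ≠ 0) :
    (Complex.I * 2) ∉ closure (pingDisk g) := by
  intro h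
  have h' := Metric.closure_ball_subset_closedBall h
  rw [Metric.mem_closedBall, Complex.dist_eq] at h'
  have hc1 : (1 : ℝ) ≤ |((g.1 1 0 : ℤ) : ℝ)| := by
    exact_mod_cast Int.one_le_abs hg
  have hrle : 1 / |((g.1 1 0 : ℤ) : ℝ)| ≤ 1 := by
    rw [div_le_one (by linarith)]; exact hc1
  have him : (Complex.I * 2 - ((g.1 0 0 : ℤ) : ℂ) / ((g.1 1 0 : ℤ) : ℂ)).im = 2 := by
    have hre : (((g.1 0 0 : ℤ) : ℂ) / ((g.1 1 0 : ℤ) : ℂ)) =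
        ((((g.1 0 0 : ℤ) : ℝ) / ((g.1 1 0 : ℤ) : ℝ) : ℝ) : ℂ) := by push_cast; ring
    rw [Complex.sub_im, hre, Complex.ofReal_im]
    simp
  have h2 := Complex.abs_im_le_norm (Complex.I * 2 - ((g.1 0 0 : ℤ) : ℂ) / ((g.1 1 0 : ℤ) : ℂ))
  rw [him] at h2
  norm_num at h2
  linarith

lemma ping_pow_c (g : Matrix.SpecialLinearGroup (Fin 2) ℤ) (hg : g.1 1 0 ≠ 0)
    (e : ℤ) (he : e = 1 ∨ e = -1) : (g ^ e).1 1 0 ≠ 0 := by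
  rcases he with he | he <;> subst he
  · rwa [zpow_one]
  · rw [zpow_neg_one, (ping_inv_entries g).2]
    simpa using hg

theorem stmt3 (s : ℕ) (A : Fin s → Matrix.SpecialLinearGroup (Fin 2) ℤ)
    (hc : ∀ i, (A i).1 1 0 ≠ 0)
    (hdisj : ∀ i j : Fin s, i ≠ j →
      Disjoint (closure (pingDisk (A i))) (closure (pingDisk (A j))) ∧
      Disjoint (closure (pingDisk (A i))) (closure (pingDisk ((A j)⁻¹))) ∧
      Disjoint (closure (pingDisk ((A i)⁻¹))) (closure (pingDisk (A j))) ∧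
      Disjoint (closure (pingDisk ((A i)⁻¹))) (closure (pingDisk ((A j)⁻¹))))
    (hself : ∀ i, Disjoint (closure (pingDisk (A i))) (closure (pingDisk ((A i)⁻¹)))) :
    ∀ (m : ℕ), 1 ≤ m → ∀ (ν : ℕ → Fin s) (e : ℕ → ℤ),
      (∀ i < m, e i = 1 ∨ e i = -1) →
      (∀ i, i + 1 < m → ¬(ν (i + 1) = ν i ∧ e (i + 1) = -e i)) →
      ((List.range m).map (fun i => A (ν i) ^ e i)).prod ≠ 1 := by
  -- general disjointness for signed powers
  have hd : ∀ (i j : Fin s) (ei ej : ℤ), (ei = 1 ∨ ei = -1) → (ej = 1 ∨ ej = -1) →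
      ¬(j = i ∧ ej = -ei) →
      Disjoint (closure (pingDisk (A j ^ ej))) (closure (pingDisk (A i ^ (-ei)))) := by
    intro i j ei ej hei hej hred
    by_cases hij : j = i
    · subst hij
      have heq : ej = ei := by
        rcases hei with h1 | h1 <;> rcases hej with h2 | h2 <;> subst h1 <;> subst h2 <;>
          first | rfl | (exfalso; exact hred ⟨rfl, by norm_num⟩)
      subst heq
      rcases hej with h | h <;> subst h
      · rw [zpow_one, show (-(1:ℤ)) = -1 from rfl, zpow_neg_one]
        exact hself j
      · rw [zpow_neg_one, neg_neg, zpow_one]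
        exact (hself j).symm
    · obtain ⟨d1, d2, d3, d4⟩ := hdisj j i hij
      rcases hej with h | h <;> subst h <;> rcases hei with h | h <;> subst h <;>
        simp only [zpow_one, zpow_neg_one, neg_neg] <;> assumption
  -- the base point
  set z₀ : UpperHalfPlane := ⟨Complex.I * 2, by simp⟩ with hz₀
  have hz₀c : (z₀ : ℂ) = Complex.I * 2 := rfl
  have hbase : ∀ (i : Fin s) (ε : ℤ), (ε = 1 ∨ ε = -1) →
      (z₀ : ℂ) ∉ closure (pingDisk (A i ^ ε)) := by
    intro i ε hε
    rw [hz₀c]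
    exact ping_base _ (ping_pow_c _ (hc i) _ hε)
  -- main induction
  have main : ∀ (m : ℕ) (ν : ℕ → Fin s) (e : ℕ → ℤ),
      (∀ i < m + 1, e i = 1 ∨ e i = -1) →
      (∀ i, i + 1 < m + 1 → ¬(ν (i + 1) = ν i ∧ e (i + 1) = -e i)) →
      (((((List.range (m + 1)).map (fun i => A (ν i) ^ e i)).prod • z₀ : UpperHalfPlane)) : ℂ)
        ∈ pingDisk (A (ν 0) ^ e 0) := by
    intro m
    induction m with
    | zero =>
      intro ν e he _
      simp only [List.range_succ, List.range_zero, List.nil_append, List.map_cons, List.map_nil,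
        List.prod_cons, List.prod_nil, mul_one]
      apply ping_step _ (ping_pow_c _ (hc (ν 0)) _ (he 0 (by norm_num)))
      rw [← zpow_neg]
      exact hbase (ν 0) _ (by rcases he 0 (by norm_num) with h | h <;> rw [h] <;> norm_num)
    | succ m ih =>
      intro ν e he hred
      have hsplit : ((List.range (m + 2)).map (fun i => A (ν i) ^ e i)).prod =
          (A (ν 0) ^ e 0) *
            ((List.range (m + 1)).map (fun i => A (ν (i + 1)) ^ e (i + 1))).prod := by
        rw [List.range_succ_eq_map]
        simp [List.map_map, Function.comp_def]
      have ihrec := ih (fun i => ν (i + 1)) (fun i => e (i + 1))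
        (fun i hi => he (i + 1) (by omega))
        (fun i hi => hred (i + 1) (by omega))
      rw [hsplit, mul_smul]
      apply ping_step _ (ping_pow_c _ (hc (ν 0)) _ (he 0 (by norm_num)))
      rw [← zpow_neg]
      have hdisj' := hd (ν 0) (ν 1) (e 0) (e 1) (he 0 (by norm_num)) (he 1 (by norm_num))
        (hred 0 (by norm_num))
      intro hmem
      exact Set.disjoint_left.mp hdisj' (subset_closure ihrec) hmem
  intro m hm ν e he hred hone
  obtain ⟨k, rfl⟩ : ∃ k, m = k + 1 := ⟨m - 1, by omega⟩
  have h1 := main k ν e he hred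
  rw [hone, one_smul] at h1
  exact hbase (ν 0) (e 0) (he 0 (by norm_num)) (subset_closure h1)
end

section
/- For fixed real ε > 0 there is a constant C(ε) such that for all Q, Y, X with 1 ≤ Q ≤ Y ≤ X, the number of matrices [[a,b],[c,d]] ∈ SL₂(ℤ) with max(|a|,|b|,|c|,|d|) ≤ X, 0 < |c| ≤ Y, and Q ∣ c is at most C(ε) · X^{1+ε} · Y / Q. -/
/-- Number of `d ∈ [-Xi, Xi]` with `a*d ≡ 1 (mod c)` and `|a*d-1| ≤ Xi*|c|` is at most
`4*Xi/|a| + 1`, for `a, c ≠ 0`. -/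
lemma stmt4_dcount (Xi : ℤ) (hXi : 1 ≤ Xi) (c a : ℤ) (hc : c ≠ 0) (ha : a ≠ 0) :
    (((Finset.Icc (-Xi) Xi).filter
        (fun d => c ∣ (a * d - 1) ∧ |a * d - 1| ≤ Xi * |c|)).card : ℝ)
      ≤ 4 * (Xi : ℝ) / |(a : ℝ)| + 1 := by
  have haR : (0:ℝ) < |(a:ℝ)| := abs_pos.mpr (by exact_mod_cast ha)
  set D := (Finset.Icc (-Xi) Xi).filter
      (fun d => c ∣ (a * d - 1) ∧ |a * d - 1| ≤ Xi * |c|) with hDdef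
  rcases D.eq_empty_or_nonempty with h | ⟨d₀, hd₀⟩
  · rw [h]
    simp only [Finset.card_empty, Nat.cast_zero]
    positivity
  · have hmem : ∀ {d : ℤ}, d ∈ D → c ∣ (a*d - 1) ∧ |a*d-1| ≤ Xi*|c| := by
      intro d hd
      exact (Finset.mem_filter.mp hd).2
    obtain ⟨hdvd₀, hbd₀⟩ := hmem hd₀
    set K : ℤ := (2*Xi) / |a| with hKdef
    have haZ : (0:ℤ) < |a| := abs_pos.mpr ha
    have hcZ : (0:ℤ) < |c| := abs_pos.mpr hc
    have hclaim : ∀ {d : ℤ}, d ∈ D → c ∣ (d - d₀) ∧ (d - d₀)/c ∈ Finset.Icc (-K) K := by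
      intro d hd
      obtain ⟨hdvd, hbd⟩ := hmem hd
      obtain ⟨t, ht⟩ := hdvd
      have hac : IsCoprime a c := ⟨d, -t, by linear_combination ht⟩
      have hcop : IsCoprime c a := hac.symm
      have hdvd2 : c ∣ a * (d - d₀) := by
        have h := dvd_sub ⟨t, ht⟩ hdvd₀
        rwa [show a*d - 1 - (a*d₀ - 1) = a * (d - d₀) from by ring] at h
      have hdd : c ∣ (d - d₀) := hcop.dvd_of_dvd_mul_left hdvd2
      refine ⟨hdd, ?_⟩
      have hck : c * ((d - d₀)/c) = d - d₀ := Int.mul_ediv_cancel' hdd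
      set k := (d - d₀)/c with hkdef
      have h1 : |a| * (|c| * |k|) ≤ 2*Xi*|c| := by
        have habs : |a * (d - d₀)| ≤ 2*Xi*|c| := by
          calc |a * (d - d₀)| = |(a*d - 1) - (a*d₀ - 1)| := by
                rw [show (a*d - 1) - (a*d₀ - 1) = a * (d - d₀) from by ring]
          _ ≤ |a*d - 1| + |a*d₀ - 1| := abs_sub _ _
          _ ≤ 2*Xi*|c| := by
                have := hbd
                linarith
        calc |a| * (|c| * |k|) = |a * (c * k)| := by rw [abs_mul, abs_mul]
        _ = |a * (d - d₀)| := by rw [hck]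
        _ ≤ 2*Xi*|c| := habs
      have h2 : |k| * |a| ≤ 2*Xi := by nlinarith [abs_nonneg k, abs_nonneg a]
      have h3 : |k| ≤ K := (Int.le_ediv_iff_mul_le haZ).mpr h2
      rw [Finset.mem_Icc]
      exact abs_le.mp h3
    have hinj : Set.InjOn (fun d => (d - d₀)/c) ↑D := by
      intro x hx y hy hxy
      have hx' := (hclaim (Finset.mem_coe.mp hx)).1
      have hy' := (hclaim (Finset.mem_coe.mp hy)).1
      have : x - d₀ = y - d₀ := by
        rw [← Int.mul_ediv_cancel' hx', ← Int.mul_ediv_cancel' hy']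
        simpa using congrArg (fun z => c * z) hxy
      linarith
    have hcard : D.card ≤ (Finset.Icc (-K) K).card :=
      Finset.card_le_card_of_injOn _ (fun d hd => (hclaim hd).2) hinj
    have hK0 : 0 ≤ K := Int.ediv_nonneg (by linarith) (abs_nonneg a)
    have hIcc : (((Finset.Icc (-K) K).card : ℕ) : ℝ) = 2*(K:ℝ) + 1 := by
      rw [Int.card_Icc]
      have h4 : ((K + 1 - -K).toNat : ℤ) = 2*K+1 := by
        rw [Int.toNat_of_nonneg (by linarith)]; ring
      exact_mod_cast congrArg (fun z : ℤ => (z : ℝ)) h4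
    have hKR : (K:ℝ) ≤ 2*(Xi:ℝ)/|(a:ℝ)| := by
      rw [le_div_iff₀ haR]
      have h5 := Int.ediv_mul_le (2*Xi) (abs_ne_zero.mpr ha)
      have h6 : ((K * |a| : ℤ) : ℝ) ≤ ((2*Xi : ℤ) : ℝ) := by exact_mod_cast h5
      push_cast at h6
      linarith
    calc (D.card : ℝ) ≤ (((Finset.Icc (-K) K).card : ℕ) : ℝ) := by exact_mod_cast hcard
    _ = 2*(K:ℝ) + 1 := hIcc
    _ ≤ 4 * (Xi : ℝ) / |(a : ℝ)| + 1 := by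
        have : 2*(K:ℝ) ≤ 4*(Xi:ℝ)/|(a:ℝ)| := by
          rw [div_eq_mul_inv] at hKR ⊢
          nlinarith [hKR]
        linarith

lemma stmt4_sum_invabs (N : ℕ) :
    ∑ a ∈ Finset.Icc (-(N:ℤ)) (N:ℤ), (if a = 0 then (1:ℝ) else 1 / |(a:ℝ)|)
      = 1 + 2 * (harmonic N : ℝ) := by
  induction N with
  | zero => simp
  | succ n ih =>
    have h1 : Finset.Icc (-((n+1:ℕ):ℤ)) ((n+1:ℕ):ℤ)
        = insert (-((n:ℤ)+1)) (insert ((n:ℤ)+1) (Finset.Icc (-(n:ℤ)) (n:ℤ))) := by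
      ext x
      simp only [Finset.mem_insert, Finset.mem_Icc]
      push_cast
      omega
    have h2 : (-((n:ℤ)+1)) ∉ insert ((n:ℤ)+1) (Finset.Icc (-(n:ℤ)) (n:ℤ)) := by
      simp only [Finset.mem_insert, Finset.mem_Icc]
      omega
    have h3 : ((n:ℤ)+1) ∉ Finset.Icc (-(n:ℤ)) (n:ℤ) := by
      simp only [Finset.mem_Icc]; omega
    rw [h1, Finset.sum_insert h2, Finset.sum_insert h3, ih]
    have h4 : (-((n:ℤ)+1)) ≠ 0 := by omega
    have h5 : ((n:ℤ)+1) ≠ 0 := by omega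
    rw [if_neg h4, if_neg h5, harmonic_succ]
    have h6 : ((-((n:ℤ)+1) : ℤ) : ℝ) = -((n:ℝ)+1) := by push_cast; ring
    have h7 : ((((n:ℤ)+1) : ℤ) : ℝ) = (n:ℝ)+1 := by push_cast; ring
    rw [h6, h7, abs_neg, abs_of_nonneg (by positivity : (0:ℝ) ≤ (n:ℝ)+1)]
    push_cast
    ring

/-- the set of possible `d` for given `c, a`. -/
noncomputable def stmt4Dfin (n : ℕ) (c a : ℤ) : Finset ℤ :=
  (Finset.Icc (-(n:ℤ)) (n:ℤ)).filter (fun d => c ∣ (a * d - 1) ∧ |a * d - 1| ≤ (n:ℤ) * |c|)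

/-- the set of possible `c`. -/
noncomputable def stmt4Cfin (m : ℕ) (Q : ℤ) : Finset ℤ :=
  (Finset.Icc (-(m:ℤ)) (m:ℤ)).filter (fun c => c ≠ 0 ∧ Q ∣ c)

/-- the set of possible triples `(c, a, d)`. -/
noncomputable def stmt4F (n m : ℕ) (Q : ℤ) : Finset (ℤ×ℤ×ℤ) :=
  (stmt4Cfin m Q).biUnion (fun c => (Finset.Icc (-(n:ℤ)) (n:ℤ)).biUnion
    (fun a => (stmt4Dfin n c a).image (fun d => (c,a,d))))

lemma stmt4_cardIccZ (K : ℤ) (hK : 0 ≤ K) :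
    (((Finset.Icc (-K) K).card : ℕ) : ℝ) = 2*(K:ℝ)+1 := by
  rw [Int.card_Icc]
  have h4 : ((K + 1 - -K).toNat : ℤ) = 2*K+1 := by omega
  exact_mod_cast congrArg (fun z : ℤ => (z:ℝ)) h4

/-- for fixed `ε > 0` there is `C(ε)` such that for `1 ≤ Q ≤ Y ≤ X`, the
number of `[[a,b],[c,d]] ∈ SL₂(ℤ)` with height at most `X`, `0 < |c| ≤ Y` and `Q ∣ c`
is at most `C(ε) · X^{1+ε} · Y / Q`. -/
theorem stmt4 (ε : ℝ) (hε : 0 < ε) :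
    ∃ C : ℝ, 0 < C ∧ ∀ (Q : ℤ) (Y X : ℝ), 1 ≤ Q → (Q : ℝ) ≤ Y → Y ≤ X →
      ({p : ℤ × ℤ × ℤ × ℤ |
          p.1 * p.2.2.2 - p.2.1 * p.2.2.1 = 1 ∧
          (|p.1| : ℝ) ≤ X ∧ (|p.2.1| : ℝ) ≤ X ∧ (|p.2.2.1| : ℝ) ≤ X ∧ (|p.2.2.2| : ℝ) ≤ X ∧
          p.2.2.1 ≠ 0 ∧ (|p.2.2.1| : ℝ) ≤ Y ∧ Q ∣ p.2.2.1}.ncard : ℝ)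
        ≤ C * X ^ (1 + ε) * Y / (Q : ℝ) := by
  refine ⟨81 * (1 + 1/ε), by positivity, ?_⟩
  intro Q Y X hQ hQY hYX
  have hQR : (1:ℝ) ≤ (Q:ℝ) := by exact_mod_cast hQ
  have hQ0 : (0:ℤ) < Q := by omega
  have hQR0 : (0:ℝ) < (Q:ℝ) := by exact_mod_cast hQ0
  have hY1 : (1:ℝ) ≤ Y := le_trans hQR hQY
  have hX1 : (1:ℝ) ≤ X := le_trans hY1 hYX
  have hX0 : (0:ℝ) < X := lt_of_lt_of_le zero_lt_one hX1
  set n : ℕ := ⌊X⌋₊ with hn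
  set m : ℕ := ⌊Y⌋₊ with hm
  have hn1 : 1 ≤ n := Nat.le_floor (by exact_mod_cast hX1)
  have hm1 : 1 ≤ m := Nat.le_floor (by exact_mod_cast hY1)
  have hnX : (n:ℝ) ≤ X := Nat.floor_le (by linarith)
  have hmY : (m:ℝ) ≤ Y := Nat.floor_le (by linarith)
  have hn1R : (1:ℝ) ≤ (n:ℝ) := by exact_mod_cast hn1
  have habsX : ∀ z : ℤ, |(z : ℝ)| ≤ X ↔ |z| ≤ (n:ℤ) := by
    intro z
    rw [hn, Int.natCast_floor_eq_floor (by linarith : (0:ℝ) ≤ X), ← Int.cast_abs]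
    exact Int.le_floor.symm
  have habsY : ∀ z : ℤ, |(z : ℝ)| ≤ Y ↔ |z| ≤ (m:ℤ) := by
    intro z
    rw [hm, Int.natCast_floor_eq_floor (by linarith : (0:ℝ) ≤ Y), ← Int.cast_abs]
    exact Int.le_floor.symm
  set S := {p : ℤ × ℤ × ℤ × ℤ |
      p.1 * p.2.2.2 - p.2.1 * p.2.2.1 = 1 ∧
      (|p.1| : ℝ) ≤ X ∧ (|p.2.1| : ℝ) ≤ X ∧ (|p.2.2.1| : ℝ) ≤ X ∧ (|p.2.2.2| : ℝ) ≤ X ∧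
      p.2.2.1 ≠ 0 ∧ (|p.2.2.1| : ℝ) ≤ Y ∧ Q ∣ p.2.2.1} with hSdef
  -- Step 1: inject into triples (c, a, d)
  have hinjS : Set.InjOn (fun p : ℤ×ℤ×ℤ×ℤ => (p.2.2.1, p.1, p.2.2.2)) S := by
    rintro ⟨a,b,c,d⟩ hp ⟨a',b',c',d'⟩ hq hpq
    simp only [hSdef, Set.mem_setOf_eq] at hp hq
    simp only [Prod.mk.injEq] at hpq
    obtain ⟨hc, ha, hd⟩ := hpq
    subst hc; subst ha; subst hd
    have h1 := hp.1
    have h2 := hq.1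
    have hc0 : c ≠ 0 := hp.2.2.2.2.2.1
    have hbc : b * c = b' * c := by
      linarith
    have hb : b = b' := mul_right_cancel₀ hc0 hbc
    simp [hb]
  have hsub : (fun p : ℤ×ℤ×ℤ×ℤ => (p.2.2.1, p.1, p.2.2.2)) '' S ⊆ ↑(stmt4F n m Q) := by
    rintro _ ⟨⟨a,b,c,d⟩, hp, rfl⟩
    simp only [hSdef, Set.mem_setOf_eq] at hp
    obtain ⟨hdet, haX, hbX, hcX, hdX, hc0, hcY, hQc⟩ := hp
    simp only at hdet hc0 hQc ⊢
    have haX' : |a| ≤ (n:ℤ) := (habsX a).mp haX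
    have hbX' : |b| ≤ (n:ℤ) := (habsX b).mp hbX
    have hdX' : |d| ≤ (n:ℤ) := (habsX d).mp hdX
    have hcY' : |c| ≤ (m:ℤ) := (habsY c).mp hcY
    rw [Finset.mem_coe]
    unfold stmt4F
    refine Finset.mem_biUnion.mpr ⟨c, ?_, Finset.mem_biUnion.mpr ⟨a, ?_,
      Finset.mem_image.mpr ⟨d, ?_, rfl⟩⟩⟩
    · unfold stmt4Cfin
      refine Finset.mem_filter.mpr ⟨Finset.mem_Icc.mpr (abs_le.mp hcY'), hc0, hQc⟩
    · exact Finset.mem_Icc.mpr (abs_le.mp haX')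
    · unfold stmt4Dfin
      refine Finset.mem_filter.mpr ⟨Finset.mem_Icc.mpr (abs_le.mp hdX'), ⟨b, by
        have := mul_comm b c
        linarith⟩, ?_⟩
      have heq : |a*d - 1| = |b| * |c| := by
        rw [show a*d - 1 = b*c from by linarith, abs_mul]
      rw [heq]
      exact mul_le_mul_of_nonneg_right hbX' (abs_nonneg c)
  have hstep1 : ((S.ncard : ℕ) : ℝ) ≤ ((stmt4F n m Q).card : ℝ) := by
    have he := Set.ncard_image_of_injOn hinjS
    have h2 : ((fun p : ℤ×ℤ×ℤ×ℤ => (p.2.2.1, p.1, p.2.2.2)) '' S).ncard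
        ≤ (stmt4F n m Q).card := by
      rw [← Set.ncard_coe_finset (stmt4F n m Q)]
      exact Set.ncard_le_ncard hsub (stmt4F n m Q).finite_toSet
    rw [he] at h2
    exact_mod_cast h2
  -- Step 2: card F ≤ double sum
  have hstep2 : (stmt4F n m Q).card
      ≤ ∑ c ∈ stmt4Cfin m Q, ∑ a ∈ Finset.Icc (-(n:ℤ)) (n:ℤ), (stmt4Dfin n c a).card := by
    unfold stmt4F
    refine le_trans Finset.card_biUnion_le (Finset.sum_le_sum ?_)
    intro c hc
    refine le_trans Finset.card_biUnion_le (Finset.sum_le_sum ?_)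
    intro a ha
    exact Finset.card_image_le
  -- Step 3: inner sum bound
  have hlogX : 0 ≤ Real.log X := Real.log_nonneg hX1
  have hharm : (harmonic n : ℝ) ≤ 1 + Real.log X := by
    refine le_trans (harmonic_le_one_add_log n) ?_
    have : Real.log (n:ℝ) ≤ Real.log X := Real.log_le_log (by linarith) hnX
    linarith
  have hstep3 : ∀ c ∈ stmt4Cfin m Q,
      ∑ a ∈ Finset.Icc (-(n:ℤ)) (n:ℤ), ((stmt4Dfin n c a).card : ℝ)
        ≤ 27*X*(1+Real.log X) := by
    intro c hc
    have hc0 : c ≠ 0 := by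
      have := Finset.mem_filter.mp hc
      exact this.2.1
    have hterm : ∀ a ∈ Finset.Icc (-(n:ℤ)) (n:ℤ), ((stmt4Dfin n c a).card : ℝ)
        ≤ 8*(n:ℝ) * (if a = 0 then (1:ℝ) else 1/|(a:ℝ)|) + 1 := by
      intro a _
      by_cases ha0 : a = 0
      · rw [if_pos ha0]
        have h1 : (stmt4Dfin n c a).card ≤ (Finset.Icc (-(n:ℤ)) (n:ℤ)).card :=
          Finset.card_le_card (Finset.filter_subset _ _)
        have h2 := stmt4_cardIccZ (n:ℤ) (by positivity)
        have h2' : ((Finset.Icc (-(n:ℤ)) (n:ℤ)).card : ℝ) = 2*(n:ℝ)+1 := by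
          rw [h2]; push_cast; ring
        calc ((stmt4Dfin n c a).card : ℝ) ≤ 2*(n:ℝ)+1 := by
              rw [← h2']; exact_mod_cast h1
        _ ≤ 8*(n:ℝ)*1 + 1 := by nlinarith
      · rw [if_neg ha0]
        have hd := stmt4_dcount (n:ℤ) (by exact_mod_cast hn1) c a hc0 ha0
        have haR : (0:ℝ) < |(a:ℝ)| := by
          have : (a:ℝ) ≠ 0 := by exact_mod_cast ha0
          exact abs_pos.mpr this
        push_cast at hd
        have hle : ((stmt4Dfin n c a).card : ℝ) ≤ 4*(n:ℝ)/|(a:ℝ)| + 1 := by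
          unfold stmt4Dfin
          exact hd
        refine le_trans hle ?_
        have hnn : (0:ℝ) ≤ 4*(n:ℝ)/|(a:ℝ)| := by positivity
        have heq : 8*(n:ℝ)*(1/|(a:ℝ)|) = 4*(n:ℝ)/|(a:ℝ)| + 4*(n:ℝ)/|(a:ℝ)| := by ring
        linarith
    have hAcard : ((Finset.Icc (-(n:ℤ)) (n:ℤ)).card : ℝ) = 2*(n:ℝ)+1 := by
      rw [stmt4_cardIccZ (n:ℤ) (by positivity)]; push_cast; ring
    calc ∑ a ∈ Finset.Icc (-(n:ℤ)) (n:ℤ), ((stmt4Dfin n c a).card : ℝ)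
        ≤ ∑ a ∈ Finset.Icc (-(n:ℤ)) (n:ℤ),
            (8*(n:ℝ) * (if a = 0 then (1:ℝ) else 1/|(a:ℝ)|) + 1) := Finset.sum_le_sum hterm
    _ = 8*(n:ℝ) * (∑ a ∈ Finset.Icc (-(n:ℤ)) (n:ℤ),
            (if a = 0 then (1:ℝ) else 1/|(a:ℝ)|)) + ((Finset.Icc (-(n:ℤ)) (n:ℤ)).card : ℝ) := by
        rw [Finset.sum_add_distrib, ← Finset.mul_sum, Finset.sum_const, nsmul_eq_mul, mul_one]
    _ = 8*(n:ℝ) * (1 + 2*(harmonic n : ℝ)) + (2*(n:ℝ)+1) := by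
        rw [stmt4_sum_invabs, hAcard]
    _ ≤ 27*X*(1+Real.log X) := by
        nlinarith [hharm, hnX, hlogX, hX1, hn1R,
          mul_nonneg (sub_nonneg.mpr hnX) hlogX]
  -- Step 4: card of Cfin
  have hQm : Q ≤ (m:ℤ) := by
    rw [hm, Int.natCast_floor_eq_floor (by linarith : (0:ℝ) ≤ Y)]
    exact Int.le_floor.mpr hQY
  set K : ℤ := (m:ℤ)/Q with hK
  have hK1 : 1 ≤ K := (Int.le_ediv_iff_mul_le hQ0).mpr (by linarith)
  have hCcard : ((stmt4Cfin m Q).card : ℝ) ≤ 3*Y/(Q:ℝ) := by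
    have hinj2 : Set.InjOn (fun c => c / Q) ↑(stmt4Cfin m Q) := by
      intro x hx y hy hxy
      have hxd : Q ∣ x := (Finset.mem_filter.mp (Finset.mem_coe.mp hx)).2.2
      have hyd : Q ∣ y := (Finset.mem_filter.mp (Finset.mem_coe.mp hy)).2.2
      rw [← Int.mul_ediv_cancel' hxd, ← Int.mul_ediv_cancel' hyd]
      simpa using congrArg (fun z => Q * z) hxy
    have hmaps : ∀ c ∈ stmt4Cfin m Q, c / Q ∈ Finset.Icc (-K) K := by
      intro c hc
      obtain ⟨hcI, hc0, hcd⟩ := Finset.mem_filter.mp hc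
      have hcm : |c| ≤ (m:ℤ) := abs_le.mpr (Finset.mem_Icc.mp hcI)
      obtain ⟨s, hs⟩ := hcd
      have hcs : c / Q = s := by rw [hs, Int.mul_ediv_cancel_left _ (by omega)]
      have habs2 : |s| * Q ≤ (m:ℤ) := by
        have h7 : |c| = Q * |s| := by rw [hs, abs_mul, abs_of_pos hQ0]
        have := mul_comm |s| Q
        linarith
      have h8 : |s| ≤ K := (Int.le_ediv_iff_mul_le hQ0).mpr habs2
      rw [hcs, Finset.mem_Icc]
      exact abs_le.mp h8
    have hcard2 : (stmt4Cfin m Q).card ≤ (Finset.Icc (-K) K).card :=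
      Finset.card_le_card_of_injOn _ hmaps hinj2
    have hKR : (K:ℝ) ≤ Y/(Q:ℝ) := by
      rw [le_div_iff₀ hQR0]
      have h5 := Int.ediv_mul_le (m:ℤ) (by omega : Q ≠ 0)
      have h6 : ((K*Q : ℤ):ℝ) ≤ (((m:ℕ):ℤ):ℝ) := by
        rw [hK]; exact_mod_cast h5
      push_cast at h6
      linarith
    have hK1R : (1:ℝ) ≤ (K:ℝ) := by exact_mod_cast hK1
    calc ((stmt4Cfin m Q).card : ℝ) ≤ 2*(K:ℝ)+1 := by
          rw [← stmt4_cardIccZ K (by omega)]; exact_mod_cast hcard2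
    _ ≤ 3*(K:ℝ) := by linarith
    _ ≤ 3*(Y/(Q:ℝ)) := by linarith
    _ = 3*Y/(Q:ℝ) := by ring
  -- Step 5: combine
  have hB0 : (0:ℝ) ≤ 27*X*(1+Real.log X) :=
    mul_nonneg (by positivity) (by linarith)
  have hsum : ∑ c ∈ stmt4Cfin m Q, ∑ a ∈ Finset.Icc (-(n:ℤ)) (n:ℤ), ((stmt4Dfin n c a).card : ℝ)
      ≤ ((stmt4Cfin m Q).card : ℝ) * (27*X*(1+Real.log X)) := by
    have h9 := Finset.sum_le_card_nsmul (stmt4Cfin m Q) _ _ hstep3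
    rwa [nsmul_eq_mul] at h9
  have htotal : ((S.ncard : ℕ) : ℝ) ≤ (3*Y/(Q:ℝ)) * (27*X*(1+Real.log X)) := by
    calc ((S.ncard : ℕ) : ℝ) ≤ ((stmt4F n m Q).card : ℝ) := hstep1
    _ ≤ ((∑ c ∈ stmt4Cfin m Q, ∑ a ∈ Finset.Icc (-(n:ℤ)) (n:ℤ), (stmt4Dfin n c a).card : ℕ) : ℝ) :=
        Nat.cast_le.mpr hstep2
    _ = ∑ c ∈ stmt4Cfin m Q, ∑ a ∈ Finset.Icc (-(n:ℤ)) (n:ℤ), ((stmt4Dfin n c a).card : ℝ) := by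
        push_cast
        rfl
    _ ≤ ((stmt4Cfin m Q).card : ℝ) * (27*X*(1+Real.log X)) := hsum
    _ ≤ (3*Y/(Q:ℝ)) * (27*X*(1+Real.log X)) := mul_le_mul_of_nonneg_right hCcard hB0
  -- Step 6: log vs rpow
  have hXε : (1:ℝ) ≤ X ^ ε := by
    calc (1:ℝ) = X ^ (0:ℝ) := (Real.rpow_zero X).symm
    _ ≤ X ^ ε := Real.rpow_le_rpow_of_exponent_le hX1 (le_of_lt hε)
  have hXε0 : (0:ℝ) < X ^ ε := by positivity
  have hlog2 : ε * Real.log X ≤ X ^ ε - 1 := by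
    have h10 := Real.log_le_sub_one_of_pos hXε0
    rwa [Real.log_rpow hX0] at h10
  have hgoal : (1 + Real.log X) ≤ (1+1/ε) * X^ε := by
    have h1 : Real.log X ≤ (X^ε - 1)/ε := by
      rw [le_div_iff₀ hε]
      calc Real.log X * ε = ε * Real.log X := by ring
      _ ≤ X^ε - 1 := hlog2
    have h3 : (X^ε - 1)/ε ≤ X^ε/ε := by
      rw [div_eq_mul_inv, div_eq_mul_inv]
      exact mul_le_mul_of_nonneg_right (by linarith) (inv_nonneg.mpr hε.le)
    have h4 : (1+1/ε) * X^ε = X^ε + X^ε/ε := by field_simp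
    rw [h4]
    linarith
  have hfinal : 81*X*(1+Real.log X) ≤ 81*(1+1/ε) * X^(1+ε) := by
    rw [Real.rpow_add hX0, Real.rpow_one]
    have h11 : X*(1+Real.log X) ≤ X*((1+1/ε)*X^ε) :=
      mul_le_mul_of_nonneg_left hgoal (by linarith)
    linarith [h11]
  calc ((S.ncard : ℕ) : ℝ) ≤ (3*Y/(Q:ℝ)) * (27*X*(1+Real.log X)) := htotal
  _ = (81*X*(1+Real.log X)) * (Y/(Q:ℝ)) := by ring
  _ ≤ (81*(1+1/ε) * X^(1+ε)) * (Y/(Q:ℝ)) := by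
      refine mul_le_mul_of_nonneg_right hfinal ?_
      exact div_nonneg (by linarith) (by linarith)
  _ = 81*(1+1/ε) * X^(1+ε) * Y / (Q:ℝ) := by ring
end

section
/- For every ε > 0 there is a constant C(ε) such that for every integer t and every real X ≥ 2, the number of matrices [[a,b],[c,d]] ∈ SL₂(ℤ) with max(|a|,|b|,|c|,|d|) ≤ X, c ≠ 0, and a + d = t is at most C(ε) · X^{1+ε}. -/
-- key pointwise bound for small primes
lemma key_small (ε : ℝ) (hε : 0 < ε) (p k : ℕ) (hp : 2 ≤ p) :
    (k + 1 : ℝ) ≤ max 1 (1 / (ε * Real.log 2)) * (p : ℝ) ^ ((k : ℝ) * ε) := by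
  set s := ε * Real.log 2 with hs
  have hs0 : 0 < s := mul_pos hε (Real.log_pos (by norm_num))
  set M := max 1 (1/s) with hM
  have hM1 : 1 ≤ M := le_max_left _ _
  have hMs : 1 ≤ M * s := by
    calc 1 = (1/s) * s := by field_simp
    _ ≤ M * s := by apply mul_le_mul_of_nonneg_right (le_max_right _ _) hs0.le
  have h1 : (k + 1 : ℝ) ≤ M * (1 + k * s) := by
    have : M * (1 + k * s) = M + (M * s) * k := by ring
    rw [this]
    have : (k:ℝ) ≤ (M*s) * k := le_mul_of_one_le_left (Nat.cast_nonneg k) hMs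
    linarith
  have h2 : (1 + (k:ℝ) * s) ≤ Real.exp ((k:ℝ) * s) := by
    have := Real.add_one_le_exp ((k:ℝ) * s); linarith
  have h3 : Real.exp ((k:ℝ) * s) = (2:ℝ) ^ ((k:ℝ) * ε) := by
    rw [Real.rpow_def_of_pos (by norm_num : (0:ℝ) < 2)]
    congr 1
    rw [hs]; ring
  have h4 : (2:ℝ) ^ ((k:ℝ) * ε) ≤ (p:ℝ) ^ ((k:ℝ) * ε) := by
    apply Real.rpow_le_rpow (by norm_num) (by exact_mod_cast hp)
    positivity
  calc (k + 1 : ℝ) ≤ M * (1 + k * s) := h1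
    _ ≤ M * Real.exp ((k:ℝ) * s) := by
        apply mul_le_mul_of_nonneg_left h2 (by linarith)
    _ = M * (2:ℝ) ^ ((k:ℝ) * ε) := by rw [h3]
    _ ≤ M * (p:ℝ) ^ ((k:ℝ) * ε) := by
        apply mul_le_mul_of_nonneg_left h4 (by linarith)

lemma key_large (ε : ℝ) (hε : 0 < ε) (p k : ℕ) (hp : (2:ℝ) ≤ (p:ℝ) ^ ε) :
    (k + 1 : ℝ) ≤ (p : ℝ) ^ ((k : ℝ) * ε) := by
  have h0 : (0:ℝ) ≤ (p:ℝ) ^ ε := by linarith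
  have h1 : (k + 1 : ℝ) ≤ (2:ℝ) ^ k := by
    exact_mod_cast Nat.cast_le.2 (Nat.succ_le_of_lt (Nat.lt_two_pow_self (n := k)))
  have h2 : (2:ℝ) ^ k ≤ ((p:ℝ) ^ ε) ^ k := pow_le_pow_left₀ (by norm_num) hp k
  have h3 : ((p:ℝ) ^ ε) ^ k = (p:ℝ) ^ ((k:ℝ) * ε) := by
    rw [← Real.rpow_natCast ((p:ℝ) ^ ε) k, ← Real.rpow_mul (Nat.cast_nonneg p), mul_comm]
  linarith [h3 ▸ h2]

lemma divisor_bound (ε : ℝ) (hε : 0 < ε) :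
    ∃ C : ℝ, 0 < C ∧ ∀ n : ℕ, n ≠ 0 → (n.divisors.card : ℝ) ≤ C * (n : ℝ) ^ ε := by
  set s := ε * Real.log 2 with hs
  set M := max 1 (1/s) with hM
  have hM1 : (1:ℝ) ≤ M := le_max_left _ _
  set P : ℕ := ⌈(2:ℝ) ^ (1/ε)⌉₊ + 1 with hP
  refine ⟨M ^ P, by positivity, fun n hn => ?_⟩
  have hPbig : ∀ p : ℕ, P ≤ p → (2:ℝ) ≤ (p:ℝ) ^ ε := by
    intro p hpP
    have h1 : (2:ℝ) ^ (1/ε) ≤ (p:ℝ) := by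
      calc (2:ℝ) ^ (1/ε) ≤ (⌈(2:ℝ) ^ (1/ε)⌉₊ : ℝ) := Nat.le_ceil _
        _ ≤ (p:ℝ) := by exact_mod_cast le_trans (Nat.le_succ _) hpP
    calc (2:ℝ) = ((2:ℝ) ^ (1/ε)) ^ ε := by
          rw [← Real.rpow_mul (by norm_num), one_div_mul_cancel hε.ne', Real.rpow_one]
      _ ≤ (p:ℝ) ^ ε := Real.rpow_le_rpow (by positivity) h1 hε.le
  rw [Nat.card_divisors hn]
  push_cast
  have key : ∀ p ∈ n.primeFactors,
      ((n.factorization p : ℝ) + 1) ≤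
        (if p < P then M else 1) * (p:ℝ) ^ ((n.factorization p : ℝ) * ε) := by
    intro p hp
    have hp2 : 2 ≤ p := (Nat.prime_of_mem_primeFactors hp).two_le
    by_cases h : p < P
    · rw [if_pos h]; exact key_small ε hε p (n.factorization p) hp2
    · simp only [h, if_false, one_mul]
      exact key_large ε hε p _ (hPbig p (not_lt.1 h))
  calc (∏ p ∈ n.primeFactors, ((n.factorization p : ℝ) + 1))
      ≤ ∏ p ∈ n.primeFactors,
          (if p < P then M else 1) * (p:ℝ) ^ ((n.factorization p : ℝ) * ε) := by
        apply Finset.prod_le_prod (fun p _ => by positivity) key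
    _ = (∏ p ∈ n.primeFactors, (if p < P then M else 1)) *
        (∏ p ∈ n.primeFactors, (p:ℝ) ^ ((n.factorization p : ℝ) * ε)) := by
        rw [Finset.prod_mul_distrib]
    _ ≤ M ^ P * (n:ℝ) ^ ε := by
        apply mul_le_mul ?_ ?_ (by positivity) (by positivity)
        · calc (∏ p ∈ n.primeFactors, (if p < P then M else 1))
              = M ^ (n.primeFactors.filter (· < P)).card := by
                rw [Finset.prod_ite, Finset.prod_const, Finset.prod_const, one_pow, mul_one]
            _ ≤ M ^ P := by
                apply pow_le_pow_right₀ hM1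
                calc (n.primeFactors.filter (· < P)).card ≤ (Finset.range P).card := by
                      apply Finset.card_le_card
                      intro x hx
                      simp only [Finset.mem_filter] at hx
                      exact Finset.mem_range.2 hx.2
                  _ = P := Finset.card_range P
        · have : ∀ p ∈ n.primeFactors, (p:ℝ) ^ ((n.factorization p : ℝ) * ε)
              = ((p:ℝ) ^ (n.factorization p : ℕ)) ^ ε := by
            intro p _
            rw [← Real.rpow_natCast (p:ℝ) (n.factorization p),
              ← Real.rpow_mul (Nat.cast_nonneg p)]
          rw [Finset.prod_congr rfl this, Real.finset_prod_rpow _ _ (fun p _ => by positivity)]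
          apply le_of_eq
          congr 1
          norm_cast
          rw [← Nat.support_factorization]
          exact Nat.factorization_prod_pow_eq_self hn

def intDivisors (n : ℤ) : Finset ℤ :=
  n.natAbs.divisors.image (fun d : ℕ => (d:ℤ)) ∪ n.natAbs.divisors.image (fun d : ℕ => -(d:ℤ))

lemma card_intDivisors (n : ℤ) : (intDivisors n).card ≤ 2 * n.natAbs.divisors.card := by
  calc (intDivisors n).card
      ≤ (n.natAbs.divisors.image (fun d : ℕ => (d:ℤ))).card
        + (n.natAbs.divisors.image (fun d : ℕ => -(d:ℤ))).card := Finset.card_union_le _ _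
    _ ≤ n.natAbs.divisors.card + n.natAbs.divisors.card :=
        add_le_add (Finset.card_image_le) (Finset.card_image_le)
    _ = 2 * n.natAbs.divisors.card := (two_mul _).symm

lemma mem_intDivisors {n b : ℤ} (hn : n ≠ 0) (h : b ∣ n) : b ∈ intDivisors n := by
  have h1 : b.natAbs ∈ n.natAbs.divisors :=
    Nat.mem_divisors.2 ⟨Int.natAbs_dvd_natAbs.2 h, Int.natAbs_ne_zero.2 hn⟩
  rcases Int.natAbs_eq b with hb | hb
  · exact Finset.mem_union_left _ (Finset.mem_image.2 ⟨b.natAbs, h1, hb.symm⟩)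
  · exact Finset.mem_union_right _ (Finset.mem_image.2 ⟨b.natAbs, h1, hb.symm⟩)


/-- for every `ε > 0` there is `C(ε)` such that for every integer `t` and
real `X ≥ 2`, the number of `[[a,b],[c,d]] ∈ SL₂(ℤ)` with height at most `X`, `c ≠ 0`
and `a + d = t` is at most `C(ε) · X^{1+ε}`. -/
theorem stmt5 (ε : ℝ) (hε : 0 < ε) :
    ∃ C : ℝ, 0 < C ∧ ∀ (t : ℤ) (X : ℝ), 2 ≤ X →
      ({p : ℤ × ℤ × ℤ × ℤ |
          p.1 * p.2.2.2 - p.2.1 * p.2.2.1 = 1 ∧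
          (|p.1| : ℝ) ≤ X ∧ (|p.2.1| : ℝ) ≤ X ∧ (|p.2.2.1| : ℝ) ≤ X ∧ (|p.2.2.2| : ℝ) ≤ X ∧
          p.2.2.1 ≠ 0 ∧ p.1 + p.2.2.2 = t}.ncard : ℝ)
        ≤ C * X ^ (1 + ε) := by
  obtain ⟨C₀, hC₀, hdiv⟩ := divisor_bound (ε/2) (by positivity)
  refine ⟨6 * C₀ * 2 ^ (ε/2) + 6, by positivity, fun t X hX => ?_⟩
  have hX1 : (1:ℝ) ≤ X := by linarith
  have hX0 : (0:ℝ) < X := by linarith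
  set N : ℤ := ⌊X⌋ with hNdef
  have hN1 : 1 ≤ N := by
    have : (1:ℤ) ≤ ⌊X⌋ := Int.le_floor.2 (by exact_mod_cast hX1)
    exact this
  have hNX : (N:ℝ) ≤ X := Int.floor_le X
  have hN0 : (0:ℝ) ≤ (N:ℝ) := by exact_mod_cast hN1.trans' (by norm_num)
  set n : ℤ → ℤ := fun a => a * (t - a) - 1 with hn
  set T' : Finset ℤ := (Finset.Icc (-N) N).filter (fun a => n a ≠ 0 ∧ |t - a| ≤ N) with hT'
  set g : ℤ → Finset (ℤ×ℤ×ℤ×ℤ) :=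
    fun a => (intDivisors (n a)).image (fun b => (a, b, (n a)/b, t-a)) with hg
  set g₂ : ℤ → Finset (ℤ×ℤ×ℤ×ℤ) :=
    fun a => (Finset.Icc (-N) N).image (fun c => (a, 0, c, t-a)) with hg2
  set F : Finset (ℤ×ℤ×ℤ×ℤ) := T'.biUnion g ∪ ({-1,1} : Finset ℤ).biUnion g₂ with hF
  have key : ∀ z : ℤ, |(z:ℝ)| ≤ X → |z| ≤ N := by
    intro z hz
    apply Int.le_floor.2
    rw [Int.cast_abs]
    exact hz
  -- set is contained in F
  have hSF : {p : ℤ × ℤ × ℤ × ℤ |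
          p.1 * p.2.2.2 - p.2.1 * p.2.2.1 = 1 ∧
          (|p.1| : ℝ) ≤ X ∧ (|p.2.1| : ℝ) ≤ X ∧ (|p.2.2.1| : ℝ) ≤ X ∧ (|p.2.2.2| : ℝ) ≤ X ∧
          p.2.2.1 ≠ 0 ∧ p.1 + p.2.2.2 = t} ⊆ ↑F := by
    rintro ⟨a, b, c, d⟩ hp
    simp only [Set.mem_setOf_eq] at hp
    obtain ⟨hdet, ha, hb, hc, hd, hc0, htr⟩ := hp
    have hd' : d = t - a := by omega
    have hbc : b * c = n a := by
      simp only [hn]; rw [← hd']; linarith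
    have haN : |a| ≤ N := key a ha
    have hdN : |t - a| ≤ N := hd' ▸ key d hd
    have hcN : |c| ≤ N := key c hc
    rw [Finset.coe_union]
    by_cases hn0 : n a = 0
    · right
      have hbz : b = 0 := by
        rcases mul_eq_zero.1 (hbc.trans hn0) with h | h
        · exact h
        · exact absurd h hc0
      have hau : a = 1 ∨ a = -1 := by
        have h1 : a * (t - a) = 1 := by
          have := hn0; simp only [hn] at this; linarith
        exact Int.isUnit_iff.1 (IsUnit.of_mul_eq_one (a := a) (t-a) h1)
      have : (a, b, c, d) ∈ ({-1,1} : Finset ℤ).biUnion g₂ := by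
        apply Finset.mem_biUnion.2
        refine ⟨a, by rcases hau with h | h <;> simp [h], ?_⟩
        apply Finset.mem_image.2
        exact ⟨c, Finset.mem_Icc.2 (abs_le.1 hcN), by rw [hbz, hd']⟩
      exact_mod_cast this
    · left
      have hb0 : b ≠ 0 := by
        intro h; apply hn0; rw [← hbc, h, zero_mul]
      have hdvd : b ∣ n a := ⟨c, hbc.symm⟩
      have : (a, b, c, d) ∈ T'.biUnion g := by
        apply Finset.mem_biUnion.2
        refine ⟨a, Finset.mem_filter.2 ⟨Finset.mem_Icc.2 (abs_le.1 haN), hn0, hdN⟩, ?_⟩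
        apply Finset.mem_image.2
        refine ⟨b, mem_intDivisors hn0 hdvd, ?_⟩
        have : n a / b = c := by rw [← hbc, Int.mul_ediv_cancel_left c hb0]
        rw [this, hd']
      exact_mod_cast this
  -- ncard ≤ F.card
  have h1 : ({p : ℤ × ℤ × ℤ × ℤ |
          p.1 * p.2.2.2 - p.2.1 * p.2.2.1 = 1 ∧
          (|p.1| : ℝ) ≤ X ∧ (|p.2.1| : ℝ) ≤ X ∧ (|p.2.2.1| : ℝ) ≤ X ∧ (|p.2.2.2| : ℝ) ≤ X ∧
          p.2.2.1 ≠ 0 ∧ p.1 + p.2.2.2 = t}.ncard : ℝ) ≤ (F.card : ℝ) := by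
    have := Set.ncard_le_ncard hSF F.finite_toSet
    rw [Set.ncard_coe_finset] at this
    exact_mod_cast this
  -- fiber bound
  have hfiber : ∀ a ∈ T', ((g a).card : ℝ) ≤ 2 * C₀ * ((N:ℝ)^2 + 1) ^ (ε/2) := by
    intro a ha
    obtain ⟨haI, hn0, hta⟩ := Finset.mem_filter.1 ha
    have haN : |a| ≤ N := abs_le.2 (Finset.mem_Icc.1 haI)
    have habs : |n a| ≤ N^2 + 1 := by
      calc |n a| = |a * (t - a) - 1| := rfl
        _ ≤ |a * (t - a)| + 1 := by
            calc |a * (t - a) - 1| ≤ |a * (t-a)| + |(1:ℤ)| := abs_sub _ _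
              _ = |a * (t-a)| + 1 := by norm_num
        _ = |a| * |t - a| + 1 := by rw [abs_mul]
        _ ≤ N * N + 1 := by
            have := mul_le_mul haN hta (abs_nonneg _) (le_trans (abs_nonneg _) haN)
            linarith
        _ = N^2 + 1 := by ring
    have hnatAbs : ((n a).natAbs : ℝ) ≤ (N:ℝ)^2 + 1 := by
      rw [Nat.cast_natAbs]
      exact_mod_cast habs
    calc ((g a).card : ℝ) ≤ ((intDivisors (n a)).card : ℝ) := by
          exact_mod_cast Finset.card_image_le
      _ ≤ 2 * ((n a).natAbs.divisors.card : ℝ) := by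
          exact_mod_cast card_intDivisors (n a)
      _ ≤ 2 * (C₀ * ((n a).natAbs : ℝ) ^ (ε/2)) := by
          have := hdiv (n a).natAbs (Int.natAbs_ne_zero.2 hn0)
          linarith
      _ ≤ 2 * C₀ * ((N:ℝ)^2 + 1) ^ (ε/2) := by
          rw [mul_assoc]
          apply mul_le_mul_of_nonneg_left ?_ (by norm_num)
          apply mul_le_mul_of_nonneg_left ?_ hC₀.le
          exact Real.rpow_le_rpow (Nat.cast_nonneg _) hnatAbs (by positivity)
  -- card Icc
  have hIcc : ((Finset.Icc (-N) N).card : ℝ) ≤ 2 * (N:ℝ) + 1 := by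
    have h2 : (((Finset.Icc (-N) N).card : ℕ) : ℤ) = 2*N+1 := by
      rw [Int.card_Icc, Int.toNat_of_nonneg (by omega)]; ring
    have h3 : (((Finset.Icc (-N) N).card : ℕ) : ℝ) = 2*(N:ℝ)+1 := by
      exact_mod_cast congrArg (Int.cast : ℤ → ℝ) h2
    linarith [h3.le]
  -- card bounds for the two pieces
  have hT'card : (T'.card : ℝ) ≤ 2*(N:ℝ)+1 := by
    have := Finset.card_le_card (Finset.filter_subset (fun a => n a ≠ 0 ∧ |t - a| ≤ N) (Finset.Icc (-N) N))
    calc (T'.card : ℝ) ≤ ((Finset.Icc (-N) N).card : ℝ) := by exact_mod_cast this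
      _ ≤ 2*(N:ℝ)+1 := hIcc
  have hB1 : ((T'.biUnion g).card : ℝ) ≤ (2*(N:ℝ)+1) * (2 * C₀ * ((N:ℝ)^2+1)^(ε/2)) := by
    calc ((T'.biUnion g).card : ℝ) ≤ ∑ a ∈ T', ((g a).card : ℝ) := by
          exact_mod_cast Finset.card_biUnion_le
      _ ≤ ∑ _a ∈ T', (2 * C₀ * ((N:ℝ)^2+1)^(ε/2)) := Finset.sum_le_sum hfiber
      _ = (T'.card : ℝ) * (2 * C₀ * ((N:ℝ)^2+1)^(ε/2)) := by
          rw [Finset.sum_const, nsmul_eq_mul]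
      _ ≤ (2*(N:ℝ)+1) * (2 * C₀ * ((N:ℝ)^2+1)^(ε/2)) := by
          apply mul_le_mul_of_nonneg_right hT'card (by positivity)
  have hB2 : ((({-1,1} : Finset ℤ).biUnion g₂).card : ℝ) ≤ 2 * (2*(N:ℝ)+1) := by
    calc ((({-1,1} : Finset ℤ).biUnion g₂).card : ℝ)
        ≤ ∑ a ∈ ({-1,1} : Finset ℤ), ((g₂ a).card : ℝ) := by
          exact_mod_cast Finset.card_biUnion_le
      _ ≤ ∑ _a ∈ ({-1,1} : Finset ℤ), (2*(N:ℝ)+1) := by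
          apply Finset.sum_le_sum
          intro a _
          calc ((g₂ a).card : ℝ) ≤ ((Finset.Icc (-N) N).card : ℝ) := by
                exact_mod_cast Finset.card_image_le
            _ ≤ 2*(N:ℝ)+1 := hIcc
      _ = 2 * (2*(N:ℝ)+1) := by
          rw [Finset.sum_const]
          norm_num
          ring
  have hFcard : (F.card : ℝ) ≤ (2*(N:ℝ)+1) * (2 * C₀ * ((N:ℝ)^2+1)^(ε/2)) + 2 * (2*(N:ℝ)+1) := by
    calc (F.card : ℝ) ≤ ((T'.biUnion g).card : ℝ) + ((({-1,1} : Finset ℤ).biUnion g₂).card : ℝ) := by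
          exact_mod_cast Finset.card_union_le _ _
      _ ≤ _ := add_le_add hB1 hB2
  have e1 : 2*(N:ℝ)+1 ≤ 3*X := by linarith
  have e2 : ((N:ℝ)^2+1)^(ε/2) ≤ 2^(ε/2) * X^ε := by
    calc ((N:ℝ)^2+1)^(ε/2) ≤ (2*X^2)^(ε/2) := by
          apply Real.rpow_le_rpow (by positivity) (by nlinarith) (by positivity)
      _ = 2^(ε/2) * (X^2)^(ε/2) := Real.mul_rpow (by norm_num) (by positivity)
      _ = 2^(ε/2) * X^ε := by
          congr 1
          rw [← Real.rpow_natCast X 2, ← Real.rpow_mul hX0.le]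
          congr 1
          push_cast
          ring
  have hxx : X * X^ε = X^(1+ε) := by rw [Real.rpow_add hX0, Real.rpow_one]
  have hx1 : X ≤ X^(1+ε) := by
    nth_rewrite 1 [← Real.rpow_one X]
    exact Real.rpow_le_rpow_of_exponent_le hX1 (by linarith)
  calc ({p : ℤ × ℤ × ℤ × ℤ |
          p.1 * p.2.2.2 - p.2.1 * p.2.2.1 = 1 ∧
          (|p.1| : ℝ) ≤ X ∧ (|p.2.1| : ℝ) ≤ X ∧ (|p.2.2.1| : ℝ) ≤ X ∧ (|p.2.2.2| : ℝ) ≤ X ∧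
          p.2.2.1 ≠ 0 ∧ p.1 + p.2.2.2 = t}.ncard : ℝ)
      ≤ (F.card : ℝ) := h1
    _ ≤ (2*(N:ℝ)+1) * (2 * C₀ * ((N:ℝ)^2+1)^(ε/2)) + 2 * (2*(N:ℝ)+1) := hFcard
    _ ≤ 3*X * (2 * C₀ * (2^(ε/2) * X^ε)) + 2 * (3*X) := by
        apply add_le_add ?_ (by linarith)
        apply mul_le_mul e1 ?_ (by positivity) (by positivity)
        exact mul_le_mul_of_nonneg_left e2 (by positivity)
    _ = 6 * C₀ * 2^(ε/2) * (X * X^ε) + 6 * X := by ring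
    _ ≤ 6 * C₀ * 2^(ε/2) * X^(1+ε) + 6 * X^(1+ε) := by
        rw [hxx]
        have h6 : 6 * X ≤ 6 * X^(1+ε) := by linarith
        linarith
    _ = (6 * C₀ * 2^(ε/2) + 6) * X^(1+ε) := by ring
end

section
/- For every ε > 0 there is a constant C(ε) such that for all reals Q, Y, X with 1 ≤ Q ≤ Y ≤ X, the number of pairs of matrices (A₁, A₂) = ([[a₁,b₁],[c₁,d₁]], [[a₂,b₂],[c₂,d₂]]) in SL₂(ℤ)² with both heights at most X, both c₁, c₂ nonzero and divisible by Q, satisfying Y/2 < min(|c₁|, |c₂|) ≤ Y and |a₁/c₁ - a₂/c₂| ≤ 1/|c₁| + 1/|c₂|, is at most C(ε) · X^{3+ε} / Q². -/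
open Finset

/-- Count of integers in a residue class within `[-X, X]`. -/
lemma resCount (s : Finset ℤ) (m : ℤ) (hm : 0 < m) (X : ℝ) (hX : 0 ≤ X)
    (h1 : ∀ x ∈ s, (|x| : ℝ) ≤ X) (h2 : ∀ x ∈ s, ∀ y ∈ s, m ∣ x - y) :
    (s.card : ℝ) ≤ 2 * X / m + 1 := by
  have hmR : (0:ℝ) < (m:ℝ) := by exact_mod_cast hm
  rcases s.eq_empty_or_nonempty with rfl | ⟨r, hr⟩
  · simp; positivity
  · set f : ℤ → ℤ := fun x => (x - r) / m with hf
    have hinj : Set.InjOn f s := by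
      intro x hx y hy hxy
      have dx := h2 x hx r hr
      have dy := h2 y hy r hr
      have ex : m * ((x - r)/m) = x - r := Int.mul_ediv_cancel' dx
      have ey : m * ((y - r)/m) = y - r := Int.mul_ediv_cancel' dy
      have : x - r = y - r := by
        rw [← ex, ← ey]; exact congrArg (m * ·) hxy
      omega
    have hcard : s.card = (s.image f).card := (Finset.card_image_of_injOn hinj).symm
    have hsub : s.image f ⊆ Finset.Icc ⌈((-X - r)/m : ℝ)⌉ ⌊((X - r)/m : ℝ)⌋ := by
      intro t ht
      obtain ⟨x, hx, rfl⟩ := Finset.mem_image.mp ht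
      have dx := h2 x hx r hr
      have ex : m * ((x - r)/m) = x - r := Int.mul_ediv_cancel' dx
      have hax : (|x| : ℝ) ≤ X := h1 x hx
      have hax' : -X ≤ (x:ℝ) ∧ (x:ℝ) ≤ X := abs_le.mp (by exact_mod_cast hax)
      have exr : ((m:ℝ)) * ((f x : ℤ) : ℝ) = (x:ℝ) - r := by exact_mod_cast congrArg (Int.cast : ℤ → ℝ) ex
      rw [Finset.mem_Icc]
      constructor
      · rw [Int.ceil_le]
        rw [div_le_iff₀ hmR]
        nlinarith [hax'.1]
      · rw [Int.le_floor]
        rw [le_div_iff₀ hmR]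
        nlinarith [hax'.2]
    have hle : (s.image f).card ≤ (Finset.Icc ⌈((-X - r)/m : ℝ)⌉ ⌊((X - r)/m : ℝ)⌋).card :=
      Finset.card_le_card hsub
    rw [hcard]
    refine le_trans (Nat.cast_le.mpr hle) ?_
    rw [Int.card_Icc]
    set a := ⌈((-X - r)/m : ℝ)⌉
    set b := ⌊((X - r)/m : ℝ)⌋
    have h1' : ((b:ℝ)) ≤ (X - r)/m := Int.floor_le _
    have h2' : ((-X - r)/m : ℝ) ≤ a := Int.le_ceil _
    have : ((b + 1 - a : ℤ) : ℝ) ≤ 2*X/m + 1 := by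
      push_cast
      have : ((-X - r)/m : ℝ) = -X/m - r/m := by ring
      have h3 : (X - r)/m - ((-X - r)/m) = 2*X/m := by field_simp; ring
      nlinarith
    have htn : ((b + 1 - a).toNat : ℝ) ≤ max ((b+1-a : ℤ):ℝ) 0 := by
      rcases le_or_gt (b+1-a) 0 with h | h
      · simp [Int.toNat_of_nonpos h]
      · have : ((b + 1 - a).toNat : ℤ) = b + 1 - a := Int.toNat_of_nonneg h.le
        have : ((b + 1 - a).toNat : ℝ) = ((b + 1 - a : ℤ) : ℝ) := by exact_mod_cast this
        rw [this]; exact le_max_left _ _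
    exact htn.trans (max_le this (by positivity))

lemma card_le_image_mul {α β : Type*} [DecidableEq β] (t : Finset α) (f : α → β) (B F : ℝ)
    (hF0 : 0 ≤ F)
    (hB : ((t.image f).card : ℝ) ≤ B)
    (hF : ∀ b ∈ t.image f, ((t.filter (fun x => f x = b)).card : ℝ) ≤ F) :
    (t.card : ℝ) ≤ B * F := by
  classical
  have h := Finset.card_eq_sum_card_fiberwise (f := f) (s := t) (t := t.image f)
    (fun x hx => Finset.mem_image_of_mem f hx)
  have : (t.card : ℝ) = ∑ b ∈ t.image f, ((t.filter (fun x => f x = b)).card : ℝ) := by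
    rw [h]; push_cast; rfl
  rw [this]
  calc ∑ b ∈ t.image f, ((t.filter (fun x => f x = b)).card : ℝ)
      ≤ ∑ _b ∈ t.image f, F := Finset.sum_le_sum hF
    _ = ((t.image f).card : ℝ) * F := by rw [Finset.sum_const, nsmul_eq_mul]
    _ ≤ B * F := mul_le_mul_of_nonneg_right hB hF0

abbrev T8 := (ℤ × ℤ × ℤ × ℤ) × (ℤ × ℤ × ℤ × ℤ)

lemma pair_fiber_bound (t : Finset T8) (c₁ c₂ : ℤ) (X : ℝ)
    (hc1 : c₁ ≠ 0) (hc2 : c₂ ≠ 0) (hcc : |c₂| ≤ |c₁|) (hc1X : (|c₁| : ℝ) ≤ X)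
    (hmem : ∀ q ∈ t, q.1.2.2.1 = c₁ ∧ q.2.2.2.1 = c₂ ∧
      q.1.1 * q.1.2.2.2 - q.1.2.1 * c₁ = 1 ∧ q.2.1 * q.2.2.2.2 - q.2.2.1 * c₂ = 1 ∧
      (|q.1.1| : ℝ) ≤ X ∧ (|q.1.2.2.2| : ℝ) ≤ X ∧ (|q.2.2.2.2| : ℝ) ≤ X ∧
      (|q.1.1 * c₂ - q.2.1 * c₁| : ℝ) ≤ (|c₁| : ℝ) + (|c₂| : ℝ)) :
    (t.card : ℝ) ≤ 135 * X ^ 3 / (|(c₁ : ℝ)| * |(c₂ : ℝ)|) := by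
  classical
  have hac1 : (0:ℤ) < |c₁| := abs_pos.mpr hc1
  have hac2 : (0:ℤ) < |c₂| := abs_pos.mpr hc2
  have hccR : |(c₂:ℝ)| ≤ |(c₁:ℝ)| := by exact_mod_cast hcc
  have hc1XR : |(c₁:ℝ)| ≤ X := by exact_mod_cast hc1X
  have hac1R : (0:ℝ) < |(c₁:ℝ)| := by positivity
  have hac2R : (0:ℝ) < |(c₂:ℝ)| := by positivity
  have hXpos : (0:ℝ) < X := lt_of_lt_of_le hac1R hc1XR
  have hc2XR : |(c₂:ℝ)| ≤ X := le_trans hccR hc1XR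
  -- gcd facts
  have hgnat : 0 < Int.gcd c₁ c₂ := Int.gcd_pos_of_ne_zero_left c₂ hc1
  set g : ℤ := (Int.gcd c₁ c₂ : ℤ) with hgdef
  have hg : 0 < g := by positivity
  have hg1 : g ∣ c₁ := Int.gcd_dvd_left c₁ c₂
  have hg2 : g ∣ c₂ := Int.gcd_dvd_right c₁ c₂
  have hgle : g ≤ |c₁| := Int.le_of_dvd hac1 ((dvd_abs _ _).mpr hg1)
  have hgR : (0:ℝ) < (g:ℝ) := by exact_mod_cast hg
  have hgleR : (g:ℝ) ≤ |(c₁:ℝ)| := by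
    have : ((g:ℤ):ℝ) ≤ ((|c₁|:ℤ):ℝ) := by exact_mod_cast hgle
    simpa [Int.cast_abs] using this
  set c₁' : ℤ := c₁ / g with hc1'def
  set c₂' : ℤ := c₂ / g with hc2'def
  have e1 : g * c₁' = c₁ := Int.mul_ediv_cancel' hg1
  have e2 : g * c₂' = c₂ := Int.mul_ediv_cancel' hg2
  have hc1' : c₁' ≠ 0 := by intro h; rw [h, mul_zero] at e1; exact hc1 e1.symm
  have hcop : IsCoprime c₁' c₂' := by
    rw [Int.isCoprime_iff_gcd_eq_one]
    exact Int.gcd_div_gcd_div_gcd hgnat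
  set m₁ : ℤ := |c₁'| with hm₁def
  have hm₁pos : 0 < m₁ := abs_pos.mpr hc1'
  have habs : g * m₁ = |c₁| := by
    have h := congrArg abs e1
    rw [abs_mul, abs_of_pos hg] at h
    exact h
  have hm₁R : (m₁ : ℝ) * g = |(c₁:ℝ)| := by
    have h' : ((g * m₁ : ℤ) : ℝ) = ((|c₁| : ℤ) : ℝ) := by exact_mod_cast habs
    push_cast at h'
    linarith
  have hm₁le : (m₁ : ℝ) ≤ X := by
    have h1 : m₁ ≤ |c₁| := by nlinarith [hm₁pos, hg, habs]
    have h2 : (m₁:ℝ) ≤ |(c₁:ℝ)| := by exact_mod_cast h1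
    linarith
  have hm₁Rpos : (0:ℝ) < (m₁:ℝ) := by exact_mod_cast hm₁pos
  refine le_trans (card_le_image_mul t (fun q => q.1.1 * c₂ - q.2.1 * c₁)
    (5 * |(c₁:ℝ)| / g)
    ((3*X*g/|(c₁:ℝ)|) * ((3*X/|(c₁:ℝ)|) * (3*X/|(c₂:ℝ)|))) (by positivity) ?_ ?_) ?_
  · -- number of k values
    have h := resCount (t.image (fun q => q.1.1 * c₂ - q.2.1 * c₁)) g hg
      (|(c₁:ℝ)| + |(c₂:ℝ)|) (by positivity)
      (fun k hk => by
        obtain ⟨q, hq, rfl⟩ := Finset.mem_image.mp hk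
        have h := (hmem q hq).2.2.2.2.2.2.2
        push_cast
        push_cast at h
        exact h)
      (fun x hx y hy => by
        obtain ⟨q, hq, rfl⟩ := Finset.mem_image.mp hx
        obtain ⟨q', hq', rfl⟩ := Finset.mem_image.mp hy
        have d1 : g ∣ q.1.1 * c₂ - q.2.1 * c₁ :=
          dvd_sub (Dvd.dvd.mul_left hg2 _) (Dvd.dvd.mul_left hg1 _)
        have d2 : g ∣ q'.1.1 * c₂ - q'.2.1 * c₁ :=
          dvd_sub (Dvd.dvd.mul_left hg2 _) (Dvd.dvd.mul_left hg1 _)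
        exact dvd_sub d1 d2)
    refine le_trans h ?_
    rw [div_add' _ _ _ (ne_of_gt hgR), div_le_div_iff₀ hgR hgR]
    nlinarith
  · -- per k value
    intro k hk
    set t₁ := t.filter (fun q => q.1.1 * c₂ - q.2.1 * c₁ = k) with ht₁
    have ht₁sub : t₁ ⊆ t := Finset.filter_subset _ _
    refine card_le_image_mul t₁ (fun q => q.1.1) _ _ (by positivity) ?_ ?_
    · -- number of a₁ values: residue class mod c₁/g
      have h := resCount (t₁.image (fun q => q.1.1)) m₁ hm₁pos X hXpos.le
        (fun x hx => by
          obtain ⟨q, hq, rfl⟩ := Finset.mem_image.mp hx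
          exact (hmem q (ht₁sub hq)).2.2.2.2.1)
        (fun x hx y hy => by
          obtain ⟨q, hq, rfl⟩ := Finset.mem_image.mp hx
          obtain ⟨q', hq', rfl⟩ := Finset.mem_image.mp hy
          have hk1 : q.1.1 * c₂ - q.2.1 * c₁ = k := (Finset.mem_filter.mp hq).2
          have hk2 : q'.1.1 * c₂ - q'.2.1 * c₁ = k := (Finset.mem_filter.mp hq').2
          have heq : c₂ * (q.1.1 - q'.1.1) = c₁ * (q.2.1 - q'.2.1) := by
            linear_combination hk1 - hk2
          have heq' : c₂' * (q.1.1 - q'.1.1) = c₁' * (q.2.1 - q'.2.1) := by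
            apply mul_left_cancel₀ (show g ≠ 0 by omega)
            rw [← mul_assoc, ← mul_assoc, e1, e2]; exact heq
          have hdvd : c₁' ∣ q.1.1 - q'.1.1 := by
            refine hcop.dvd_of_dvd_mul_left ⟨q.2.1 - q'.2.1, ?_⟩
            linear_combination heq'
          exact (abs_dvd _ _).mpr hdvd)
      refine le_trans h ?_
      have h2 : (m₁:ℝ) ≤ X := hm₁le
      rw [div_add' _ _ _ (ne_of_gt hm₁Rpos), div_le_div_iff₀ hm₁Rpos hac1R]
      nlinarith [hm₁R, hgR, hm₁Rpos]
    · -- per a₁ value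
      intro a ha
      set t₂ := t₁.filter (fun q => q.1.1 = a) with ht₂
      have ht₂sub : t₂ ⊆ t := (Finset.filter_subset _ _).trans ht₁sub
      refine card_le_image_mul t₂ (fun q => q.1.2.2.2) _ _ (by positivity) ?_ ?_
      · -- number of d₁ values
        have h := resCount (t₂.image (fun q => q.1.2.2.2)) (|c₁|) hac1 X hXpos.le
          (fun x hx => by
            obtain ⟨q, hq, rfl⟩ := Finset.mem_image.mp hx
            exact (hmem q (ht₂sub hq)).2.2.2.2.2.1)
          (fun x hx y hy => by
            obtain ⟨q, hq, rfl⟩ := Finset.mem_image.mp hx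
            obtain ⟨q', hq', rfl⟩ := Finset.mem_image.mp hy
            have ha1 : q.1.1 = a := (Finset.mem_filter.mp hq).2
            have ha2 : q'.1.1 = a := (Finset.mem_filter.mp hq').2
            have hdet1 := (hmem q (ht₂sub hq)).2.2.1
            have hdet2 := (hmem q' (ht₂sub hq')).2.2.1
            have hcopa : IsCoprime c₁ a := ⟨-q.1.2.1, q.1.2.2.2, by
              rw [ha1] at hdet1; linear_combination hdet1⟩
            have hdvd : c₁ ∣ a * (q.1.2.2.2 - q'.1.2.2.2) := by
              refine ⟨q.1.2.1 - q'.1.2.1, ?_⟩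
              rw [ha1] at hdet1; rw [ha2] at hdet2
              linear_combination hdet1 - hdet2
            exact (abs_dvd _ _).mpr (hcopa.dvd_of_dvd_mul_left hdvd))
        rw [Int.cast_abs] at h
        refine le_trans h ?_
        rw [div_add' _ _ _ (ne_of_gt hac1R), div_le_div_iff₀ hac1R hac1R]
        nlinarith
      · -- per d₁ value: inject into d₂ values
        intro d hd
        set t₃ := t₂.filter (fun q => q.1.2.2.2 = d) with ht₃
        have ht₃sub : t₃ ⊆ t := (Finset.filter_subset _ _).trans ht₂sub
        have ha₂const : ∀ q ∈ t₃, ∀ q' ∈ t₃, q.2.1 = q'.2.1 := by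
          intro q hq q' hq'
          have hq2 := (Finset.filter_subset _ _) hq
          have hq'2 := (Finset.filter_subset _ _) hq'
          have hk1 : q.1.1 * c₂ - q.2.1 * c₁ = k :=
            (Finset.mem_filter.mp ((Finset.filter_subset _ _) hq2)).2
          have hk2 : q'.1.1 * c₂ - q'.2.1 * c₁ = k :=
            (Finset.mem_filter.mp ((Finset.filter_subset _ _) hq'2)).2
          have ha1 : q.1.1 = a := (Finset.mem_filter.mp hq2).2
          have ha2 : q'.1.1 = a := (Finset.mem_filter.mp hq'2).2
          have : q.2.1 * c₁ = q'.2.1 * c₁ := by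
            rw [ha1] at hk1; rw [ha2] at hk2; linear_combination hk2 - hk1
          exact mul_right_cancel₀ hc1 this
        have hinj : Set.InjOn (fun q : T8 => q.2.2.2.2) t₃ := by
          intro q hq q' hq' hdd
          simp only at hdd
          have hq3 := Finset.mem_coe.mp hq
          have hq'3 := Finset.mem_coe.mp hq'
          have hq2 := (Finset.filter_subset _ _) hq3
          have hq'2 := (Finset.filter_subset _ _) hq'3
          have hc1q := (hmem q (ht₃sub hq3)).1
          have hc1q' := (hmem q' (ht₃sub hq'3)).1
          have hc2q := (hmem q (ht₃sub hq3)).2.1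
          have hc2q' := (hmem q' (ht₃sub hq'3)).2.1
          have ha1 : q.1.1 = a := (Finset.mem_filter.mp hq2).2
          have ha1' : q'.1.1 = a := (Finset.mem_filter.mp hq'2).2
          have hd1 : q.1.2.2.2 = d := (Finset.mem_filter.mp hq3).2
          have hd1' : q'.1.2.2.2 = d := (Finset.mem_filter.mp hq'3).2
          have ha2 : q.2.1 = q'.2.1 := ha₂const q hq3 q' hq'3
          have hdet1 := (hmem q (ht₃sub hq3)).2.2.1
          have hdet1' := (hmem q' (ht₃sub hq'3)).2.2.1
          have hdet2 := (hmem q (ht₃sub hq3)).2.2.2.1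
          have hdet2' := (hmem q' (ht₃sub hq'3)).2.2.2.1
          have hb1 : q.1.2.1 = q'.1.2.1 := by
            have h : q.1.2.1 * c₁ = q'.1.2.1 * c₁ := by
              rw [ha1, hd1] at hdet1; rw [ha1', hd1'] at hdet1'
              linear_combination hdet1' - hdet1
            exact mul_right_cancel₀ hc1 h
          have hb2 : q.2.2.1 = q'.2.2.1 := by
            have h : q.2.2.1 * c₂ = q'.2.2.1 * c₂ := by
              rw [ha2, hdd] at hdet2
              linear_combination hdet2' - hdet2
            exact mul_right_cancel₀ hc2 h
          have h1 : q.1 = q'.1 := by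
            have := ha1.trans ha1'.symm
            have := hd1.trans hd1'.symm
            have := hc1q.trans hc1q'.symm
            ext
            · exact ha1.trans ha1'.symm
            · exact hb1
            · exact hc1q.trans hc1q'.symm
            · exact hd1.trans hd1'.symm
          have h2 : q.2 = q'.2 := by
            ext
            · exact ha2
            · exact hb2
            · exact hc2q.trans hc2q'.symm
            · exact hdd
          exact Prod.ext h1 h2
        rw [← Finset.card_image_of_injOn hinj]
        have h := resCount (t₃.image (fun q => q.2.2.2.2)) (|c₂|) hac2 X hXpos.le
          (fun x hx => by
            obtain ⟨q, hq, rfl⟩ := Finset.mem_image.mp hx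
            exact (hmem q (ht₃sub hq)).2.2.2.2.2.2.1)
          (fun x hx y hy => by
            obtain ⟨q, hq, rfl⟩ := Finset.mem_image.mp hx
            obtain ⟨q', hq', rfl⟩ := Finset.mem_image.mp hy
            have ha2 : q.2.1 = q'.2.1 := ha₂const q hq q' hq'
            have hdet2 := (hmem q (ht₃sub hq)).2.2.2.1
            have hdet2' := (hmem q' (ht₃sub hq')).2.2.2.1
            have hcopa : IsCoprime c₂ q.2.1 := ⟨-q.2.2.1, q.2.2.2.2, by
              linear_combination hdet2⟩
            have hdvd : c₂ ∣ q.2.1 * (q.2.2.2.2 - q'.2.2.2.2) := by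
              refine ⟨q.2.2.1 - q'.2.2.1, ?_⟩
              rw [← ha2] at hdet2'
              linear_combination hdet2 - hdet2'
            exact (abs_dvd _ _).mpr (hcopa.dvd_of_dvd_mul_left hdvd))
        rw [Int.cast_abs] at h
        refine le_trans h ?_
        rw [div_add' _ _ _ (ne_of_gt hac2R), div_le_div_iff₀ hac2R hac2R]
        nlinarith
  · -- final arithmetic
    have he : (5 * |(c₁:ℝ)| / g) * ((3*X*g/|(c₁:ℝ)|) * ((3*X/|(c₁:ℝ)|) * (3*X/|(c₂:ℝ)|)))
        = 135 * X ^ 3 / (|(c₁:ℝ)| * |(c₂:ℝ)|) := by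
      field_simp
      ring
    exact le_of_eq he


lemma sumInv (Q M : ℤ) (hQ : 1 ≤ Q) (X : ℝ) (hMX : (M:ℝ) ≤ X) (hX : 1 ≤ X) :
    ∑ c ∈ (Finset.Icc (-M) M).filter (fun c => c ≠ 0 ∧ Q ∣ c), (1 / |(c:ℝ)|)
      ≤ 2 / Q * (1 + Real.log X) := by
  classical
  have hQR : (0:ℝ) < (Q:ℝ) := by exact_mod_cast hQ
  have hlogX : 0 ≤ Real.log X := Real.log_nonneg hX
  set D := (Finset.Icc (-M) M).filter (fun c => c ≠ 0 ∧ Q ∣ c) with hD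
  set n : ℕ := M.toNat with hn
  set φ : ℤ → ℕ := fun c => (|c| / Q).toNat with hφ
  -- key facts about members of D
  have hmemD : ∀ c ∈ D, c ≠ 0 ∧ Q ∣ |c| ∧ 1 ≤ |c| ∧ |c| ≤ M := by
    intro c hc
    have h := Finset.mem_filter.mp hc
    have hIcc := Finset.mem_Icc.mp h.1
    have hc0 := h.2.1
    have hdvd := h.2.2
    refine ⟨hc0, (dvd_abs _ _).mpr hdvd, ?_, ?_⟩ <;>
      rcases abs_cases c with ⟨h1, h2⟩ | ⟨h1, h2⟩ <;> omega
  have hval : ∀ c ∈ D, |c| = Q * φ c := by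
    intro c hc
    obtain ⟨hc0, hdvd, h1, h2⟩ := hmemD c hc
    have := Int.ediv_mul_cancel hdvd
    have hpos : 0 ≤ |c| / Q := Int.ediv_nonneg (abs_nonneg c) (by omega)
    simp only [hφ]
    rw [Int.toNat_of_nonneg hpos, mul_comm]
    exact this.symm
  have himg : ∀ c ∈ D, φ c ∈ Finset.Icc 1 n := by
    intro c hc
    obtain ⟨hc0, hdvd, h1, h2⟩ := hmemD c hc
    have hv := hval c hc
    rw [Finset.mem_Icc]
    have hne : φ c ≠ 0 := by
      intro h0
      rw [h0] at hv
      simp at hv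
      omega
    have hub : (φ c : ℤ) ≤ M := by nlinarith [hv, hQ, Int.natCast_nonneg (φ c)]
    omega
  have hterm : ∀ c ∈ D, (1 / |(c:ℝ)|) = 1 / ((Q:ℝ) * (φ c)) := by
    intro c hc
    have hv := hval c hc
    have : |(c:ℝ)| = (Q:ℝ) * (φ c) := by
      have h' : ((|c| : ℤ) : ℝ) = ((Q : ℝ)) * ((φ c : ℕ) : ℝ) := by exact_mod_cast hv
      push_cast at h'
      push_cast
      linarith
    rw [this]
  -- fiberwise
  have hsum := Finset.sum_fiberwise_of_maps_to himg (fun c : ℤ => 1 / |(c:ℝ)|)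
  rw [← hsum]
  have hfib : ∀ u ∈ Finset.Icc 1 n,
      ∑ c ∈ D.filter (fun c => φ c = u), (1 / |(c:ℝ)|) ≤ 2 * (1 / ((Q:ℝ) * u)) := by
    intro u hu
    have hu1 : 1 ≤ u := (Finset.mem_Icc.mp hu).1
    have hcard : (D.filter (fun c => φ c = u)).card ≤ 2 := by
      have hsub : D.filter (fun c => φ c = u) ⊆ {Q * u, -(Q * u)} := by
        intro c hc
        have hcD := Finset.mem_filter.mp hc
        have hv := hval c hcD.1
        rw [hcD.2] at hv
        simp only [Finset.mem_insert, Finset.mem_singleton]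
        rcases abs_cases c with ⟨h, _⟩ | ⟨h, _⟩
        · left; omega
        · right; omega
      exact le_trans (Finset.card_le_card hsub) (by
        exact le_trans (Finset.card_insert_le _ _) (by simp))
    calc ∑ c ∈ D.filter (fun c => φ c = u), (1 / |(c:ℝ)|)
        = ∑ c ∈ D.filter (fun c => φ c = u), 1 / ((Q:ℝ) * u) := by
          refine Finset.sum_congr rfl ?_
          intro c hc
          have hcD := Finset.mem_filter.mp hc
          rw [hterm c hcD.1, hcD.2]
      _ = ((D.filter (fun c => φ c = u)).card : ℝ) * (1 / ((Q:ℝ) * u)) := by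
          rw [Finset.sum_const, nsmul_eq_mul]
      _ ≤ 2 * (1 / ((Q:ℝ) * u)) := by
          have hpos : (0:ℝ) < (Q:ℝ) * u := by positivity
          have : ((D.filter (fun c => φ c = u)).card : ℝ) ≤ 2 := by exact_mod_cast hcard
          exact mul_le_mul_of_nonneg_right this (by positivity)
  refine le_trans (Finset.sum_le_sum hfib) ?_
  -- now the harmonic sum
  have : ∑ u ∈ Finset.Icc 1 n, (2 : ℝ) * (1 / ((Q:ℝ) * u))
      = 2 / Q * ∑ u ∈ Finset.Icc 1 n, ((u:ℝ))⁻¹ := by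
    rw [Finset.mul_sum]
    refine Finset.sum_congr rfl ?_
    intro u hu
    have hu1 : 1 ≤ u := (Finset.mem_Icc.mp hu).1
    have : (0:ℝ) < (u:ℝ) := by exact_mod_cast hu1
    field_simp
  rw [this]
  have hharm : ∑ u ∈ Finset.Icc 1 n, ((u:ℝ))⁻¹ = (harmonic n : ℝ) := by
    rw [harmonic_eq_sum_Icc]
    push_cast
    rfl
  rw [hharm]
  have h2 : (harmonic n : ℝ) ≤ 1 + Real.log n := harmonic_le_one_add_log n
  have h3 : Real.log n ≤ Real.log X := by
    rcases Nat.eq_zero_or_pos n with h | h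
    · rw [h]; simpa using hlogX
    · apply Real.log_le_log (by exact_mod_cast h)
      have hnM : (n:ℤ) = M := by omega
      have : (n:ℝ) ≤ (M:ℝ) := by exact_mod_cast le_of_eq hnM
      linarith
  have h4 : (0:ℝ) ≤ 2 / Q := by positivity
  nlinarith [h2, h3, hlogX]

/-- for every `ε > 0` there is `C(ε)` such that for `1 ≤ Q ≤ Y ≤ X`, the
number of pairs `(A₁, A₂) ∈ SL₂(ℤ)²` of height at most `X` with `c₁, c₂` nonzero,
divisible by `Q`, `Y/2 < min(|c₁|,|c₂|) ≤ Y` and `|a₁/c₁ - a₂/c₂| ≤ 1/|c₁| + 1/|c₂|`,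
is at most `C(ε) · X^{3+ε} / Q²`. -/
theorem stmt6 (ε : ℝ) (hε : 0 < ε) :
    ∃ C : ℝ, 0 < C ∧ ∀ (Q : ℤ) (Y X : ℝ), 1 ≤ Q → (Q : ℝ) ≤ Y → Y ≤ X →
      ({q : (ℤ × ℤ × ℤ × ℤ) × (ℤ × ℤ × ℤ × ℤ) |
          let a₁ := q.1.1; let b₁ := q.1.2.1; let c₁ := q.1.2.2.1; let d₁ := q.1.2.2.2
          let a₂ := q.2.1; let b₂ := q.2.2.1; let c₂ := q.2.2.2.1; let d₂ := q.2.2.2.2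
          a₁ * d₁ - b₁ * c₁ = 1 ∧ a₂ * d₂ - b₂ * c₂ = 1 ∧
          (|a₁| : ℝ) ≤ X ∧ (|b₁| : ℝ) ≤ X ∧ (|c₁| : ℝ) ≤ X ∧ (|d₁| : ℝ) ≤ X ∧
          (|a₂| : ℝ) ≤ X ∧ (|b₂| : ℝ) ≤ X ∧ (|c₂| : ℝ) ≤ X ∧ (|d₂| : ℝ) ≤ X ∧
          c₁ ≠ 0 ∧ c₂ ≠ 0 ∧ Q ∣ c₁ ∧ Q ∣ c₂ ∧
          Y / 2 < (min |c₁| |c₂| : ℝ) ∧ (min |c₁| |c₂| : ℝ) ≤ Y ∧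
          |(a₁ : ℝ) / (c₁ : ℝ) - (a₂ : ℝ) / (c₂ : ℝ)| ≤ 1 / (|c₁| : ℝ) + 1 / (|c₂| : ℝ)
          }.ncard : ℝ)
        ≤ C * X ^ (3 + ε) / (Q : ℝ) ^ 2 := by
  classical
  refine ⟨540 * (1 + 2/ε)^2, by positivity, ?_⟩
  intro Q Y X hQ hQY hYX
  have hQR : (0:ℝ) < (Q:ℝ) := by exact_mod_cast hQ
  have hX1 : (1:ℝ) ≤ X := le_trans (le_trans (by exact_mod_cast hQ) hQY) hYX
  have hXpos : (0:ℝ) < X := by linarith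
  set S : Set T8 := {q : (ℤ × ℤ × ℤ × ℤ) × (ℤ × ℤ × ℤ × ℤ) |
          let a₁ := q.1.1; let b₁ := q.1.2.1; let c₁ := q.1.2.2.1; let d₁ := q.1.2.2.2
          let a₂ := q.2.1; let b₂ := q.2.2.1; let c₂ := q.2.2.2.1; let d₂ := q.2.2.2.2
          a₁ * d₁ - b₁ * c₁ = 1 ∧ a₂ * d₂ - b₂ * c₂ = 1 ∧
          (|a₁| : ℝ) ≤ X ∧ (|b₁| : ℝ) ≤ X ∧ (|c₁| : ℝ) ≤ X ∧ (|d₁| : ℝ) ≤ X ∧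
          (|a₂| : ℝ) ≤ X ∧ (|b₂| : ℝ) ≤ X ∧ (|c₂| : ℝ) ≤ X ∧ (|d₂| : ℝ) ≤ X ∧
          c₁ ≠ 0 ∧ c₂ ≠ 0 ∧ Q ∣ c₁ ∧ Q ∣ c₂ ∧
          Y / 2 < (min |c₁| |c₂| : ℝ) ∧ (min |c₁| |c₂| : ℝ) ≤ Y ∧
          |(a₁ : ℝ) / (c₁ : ℝ) - (a₂ : ℝ) / (c₂ : ℝ)| ≤ 1 / (|c₁| : ℝ) + 1 / (|c₂| : ℝ)} with hSdef
  have hmemS : ∀ q : T8, q ∈ S ↔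
      (q.1.1 * q.1.2.2.2 - q.1.2.1 * q.1.2.2.1 = 1 ∧
       q.2.1 * q.2.2.2.2 - q.2.2.1 * q.2.2.2.1 = 1 ∧
       (|(q.1.1:ℝ)|) ≤ X ∧ (|(q.1.2.1:ℝ)|) ≤ X ∧ (|(q.1.2.2.1:ℝ)|) ≤ X ∧ (|(q.1.2.2.2:ℝ)|) ≤ X ∧
       (|(q.2.1:ℝ)|) ≤ X ∧ (|(q.2.2.1:ℝ)|) ≤ X ∧ (|(q.2.2.2.1:ℝ)|) ≤ X ∧ (|(q.2.2.2.2:ℝ)|) ≤ X ∧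
       q.1.2.2.1 ≠ 0 ∧ q.2.2.2.1 ≠ 0 ∧ Q ∣ q.1.2.2.1 ∧ Q ∣ q.2.2.2.1 ∧
       Y / 2 < min (|(q.1.2.2.1:ℝ)|) (|(q.2.2.2.1:ℝ)|) ∧
       min (|(q.1.2.2.1:ℝ)|) (|(q.2.2.2.1:ℝ)|) ≤ Y ∧
       |(q.1.1 : ℝ) / (q.1.2.2.1 : ℝ) - (q.2.1 : ℝ) / (q.2.2.2.1 : ℝ)| ≤
         1 / (|(q.1.2.2.1:ℝ)|) + 1 / (|(q.2.2.2.1:ℝ)|)) := fun q => Iff.rfl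
  set M : ℤ := ⌊X⌋ with hMdef
  have hMX : (M:ℝ) ≤ X := Int.floor_le X
  have hM1 : 1 ≤ M := by exact_mod_cast Int.le_floor.mpr (by exact_mod_cast hX1)
  have hIccmem : ∀ x : ℤ, (|(x:ℝ)|) ≤ X → x ∈ Finset.Icc (-M) M := by
    intro x hx
    have h := abs_le.mp hx
    rw [Finset.mem_Icc]
    constructor
    · rw [neg_le]
      exact Int.le_floor.mpr (by push_cast; linarith)
    · exact Int.le_floor.mpr h.2
  -- the box
  set B4 : Finset (ℤ × ℤ × ℤ × ℤ) :=
    (Finset.Icc (-M) M) ×ˢ (Finset.Icc (-M) M) ×ˢ (Finset.Icc (-M) M) ×ˢ (Finset.Icc (-M) M)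
    with hB4
  have hsub : S ⊆ ↑(B4 ×ˢ B4) := by
    intro q hq
    obtain ⟨h1, h2, ha1, hb1, hc1, hd1, ha2, hb2, hc2, hd2, _⟩ := (hmemS q).mp hq
    simp only [Finset.coe_product, Set.mem_prod, hB4, Finset.mem_coe,
      Finset.mem_product]
    exact ⟨⟨hIccmem _ ha1, hIccmem _ hb1, hIccmem _ hc1, hIccmem _ hd1⟩,
      ⟨hIccmem _ ha2, hIccmem _ hb2, hIccmem _ hc2, hIccmem _ hd2⟩⟩
  have hfin : S.Finite := Set.Finite.subset (B4 ×ˢ B4).finite_toSet hsub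
  set s : Finset T8 := hfin.toFinset with hs
  have hcardS : (S.ncard : ℝ) = (s.card : ℝ) := by
    rw [Set.ncard_eq_toFinset_card S hfin]
  rw [hcardS]
  -- the c-set
  set D : Finset ℤ := (Finset.Icc (-M) M).filter (fun c => c ≠ 0 ∧ Q ∣ c) with hD
  have hmapsto : ∀ q ∈ s, (q.1.2.2.1, q.2.2.2.1) ∈ D ×ˢ D := by
    intro q hq
    obtain ⟨h1, h2, ha1, hb1, hc1, hd1, ha2, hb2, hc2, hd2, hn1, hn2, hq1, hq2, _⟩ :=
      (hmemS q).mp (hfin.mem_toFinset.mp hq)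
    rw [Finset.mem_product]
    exact ⟨Finset.mem_filter.mpr ⟨hIccmem _ hc1, hn1, hq1⟩,
      Finset.mem_filter.mpr ⟨hIccmem _ hc2, hn2, hq2⟩⟩
  have hfibers := Finset.card_eq_sum_card_fiberwise hmapsto
  -- bound each fiber
  have hfib : ∀ p ∈ D ×ˢ D,
      (((s.filter (fun q => (q.1.2.2.1, q.2.2.2.1) = p)).card : ℝ))
        ≤ 135 * X ^ 3 / (|(p.1 : ℝ)| * |(p.2 : ℝ)|) := by
    intro p hp
    obtain ⟨hp1, hp2⟩ := Finset.mem_product.mp hp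
    have hp1' := Finset.mem_filter.mp hp1
    have hp2' := Finset.mem_filter.mp hp2
    have hpIcc1 := hp1'.1
    have hpne1 := hp1'.2.1
    have hpIcc2 := hp2'.1
    have hpne2 := hp2'.2.1
    have hpX1 : (|(p.1:ℝ)|) ≤ X := by
      have h := Finset.mem_Icc.mp hpIcc1
      rw [abs_le]; constructor
      · push_cast; calc (-X) ≤ (-M : ℤ) := by push_cast; linarith
          _ ≤ (p.1 : ℝ) := by exact_mod_cast h.1
      · calc (p.1 : ℝ) ≤ (M:ℝ) := by exact_mod_cast h.2
          _ ≤ X := hMX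
    have hpX2 : (|(p.2:ℝ)|) ≤ X := by
      have h := Finset.mem_Icc.mp hpIcc2
      rw [abs_le]; constructor
      · push_cast; calc (-X) ≤ (-M : ℤ) := by push_cast; linarith
          _ ≤ (p.2 : ℝ) := by exact_mod_cast h.1
      · calc (p.2 : ℝ) ≤ (M:ℝ) := by exact_mod_cast h.2
          _ ≤ X := hMX
    set t := s.filter (fun q => (q.1.2.2.1, q.2.2.2.1) = p) with ht
    -- membership facts for t
    have hmemt : ∀ q ∈ t, q.1.2.2.1 = p.1 ∧ q.2.2.2.1 = p.2 ∧
        q.1.1 * q.1.2.2.2 - q.1.2.1 * p.1 = 1 ∧ q.2.1 * q.2.2.2.2 - q.2.2.1 * p.2 = 1 ∧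
        (|(q.1.1:ℝ)|) ≤ X ∧ (|(q.1.2.2.2:ℝ)|) ≤ X ∧ (|(q.2.2.2.2:ℝ)|) ≤ X ∧
        (|(q.1.1:ℝ) * (p.2:ℝ) - (q.2.1:ℝ) * (p.1:ℝ)|) ≤ (|(p.1:ℝ)|) + (|(p.2:ℝ)|) := by
      intro q hq
      have hqf := Finset.mem_filter.mp hq
      obtain ⟨hcp1, hcp2⟩ : q.1.2.2.1 = p.1 ∧ q.2.2.2.1 = p.2 := by
        simpa [Prod.ext_iff] using hqf.2
      obtain ⟨h1, h2, ha1, hb1, hc1, hd1, ha2, hb2, hc2, hd2, hn1, hn2, hq1, hq2, hmin1,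
        hmin2, hdio⟩ := (hmemS q).mp (hfin.mem_toFinset.mp hqf.1)
      rw [hcp1] at h1
      rw [hcp2] at h2
      rw [hcp1, hcp2] at hdio
      refine ⟨hcp1, hcp2, h1, h2, ha1, hd1, hd2, ?_⟩
      -- convert the Diophantine inequality
      have hc1R : ((p.1:ℝ)) ≠ 0 := by exact_mod_cast hpne1
      have hc2R : ((p.2:ℝ)) ≠ 0 := by exact_mod_cast hpne2
      have habs1 : (0:ℝ) < |(p.1:ℝ)| := abs_pos.mpr hc1R
      have habs2 : (0:ℝ) < |(p.2:ℝ)| := abs_pos.mpr hc2R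
      rw [div_sub_div _ _ hc1R hc2R, abs_div, div_le_iff₀ (by positivity : (0:ℝ) < |(p.1:ℝ) * (p.2:ℝ)|)] at hdio
      have heq : |(q.1.1:ℝ) * (p.2:ℝ) - (q.2.1:ℝ) * (p.1:ℝ)| = |(q.1.1:ℝ) * (p.2:ℝ) - (p.1:ℝ) * (q.2.1:ℝ)| := by
        congr 1; ring
      rw [heq]
      refine le_trans hdio (le_of_eq ?_)
      rw [abs_mul]
      field_simp
      ring
    rcases le_or_gt (|p.2|) (|p.1|) with hcc | hcc
    · exact pair_fiber_bound t p.1 p.2 X hpne1 hpne2 hcc hpX1 hmemt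
    · -- swap
      have hccR : |p.1| ≤ |p.2| := hcc.le
      set t' := t.image Prod.swap with ht'
      have hcardt : t.card = t'.card := (Finset.card_image_of_injective t Prod.swap_injective).symm
      have hres := pair_fiber_bound t' p.2 p.1 X hpne2 hpne1 hccR hpX2 (by
        intro q' hq'
        obtain ⟨q, hq, rfl⟩ := Finset.mem_image.mp hq'
        obtain ⟨e1, e2, e3, e4, e5, e6, e7, e8⟩ := hmemt q hq
        have ha2X : (|(q.2.1:ℝ)|) ≤ X :=
          ((hmemS q).mp (hfin.mem_toFinset.mp (Finset.mem_filter.mp hq).1)).2.2.2.2.2.2.1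
        simp only [Prod.fst_swap, Prod.snd_swap]
        refine ⟨e2, e1, e4, e3, ha2X, e7, e6, ?_⟩
        have hswap : |(q.2.1:ℝ) * (p.1:ℝ) - (q.1.1:ℝ) * (p.2:ℝ)|
            = |(q.1.1:ℝ) * (p.2:ℝ) - (q.2.1:ℝ) * (p.1:ℝ)| := abs_sub_comm _ _
        rw [hswap]
        linarith [e8])
      rw [hcardt]
      refine le_trans hres (le_of_eq (by ring))
  -- sum up
  have hsum1 : (s.card : ℝ) ≤ ∑ p ∈ D ×ˢ D, 135 * X ^ 3 / (|(p.1 : ℝ)| * |(p.2 : ℝ)|) := by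
    rw [hfibers]
    push_cast
    exact Finset.sum_le_sum hfib
  have hsum2 : ∑ p ∈ D ×ˢ D, 135 * X ^ 3 / (|(p.1 : ℝ)| * |(p.2 : ℝ)|)
      = 135 * X ^ 3 * ((∑ c ∈ D, 1 / |(c:ℝ)|) * (∑ c ∈ D, 1 / |(c:ℝ)|)) := by
    have h1 : (∑ c ∈ D, 1 / |(c:ℝ)|) * (∑ c ∈ D, 1 / |(c:ℝ)|)
        = ∑ x ∈ D, ∑ y ∈ D, (1 / |(x:ℝ)|) * (1 / |(y:ℝ)|) := Finset.sum_mul_sum D D _ _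
    rw [h1, Finset.sum_product, Finset.mul_sum]
    refine Finset.sum_congr rfl fun x _ => ?_
    rw [Finset.mul_sum]
    refine Finset.sum_congr rfl fun y _ => ?_
    rw [one_div_mul_one_div, mul_one_div]
  have hDsum : ∑ c ∈ D, 1 / |(c:ℝ)| ≤ 2 / Q * (1 + Real.log X) := sumInv Q M hQ X hMX hX1
  have hDnonneg : (0:ℝ) ≤ ∑ c ∈ D, 1 / |(c:ℝ)| :=
    Finset.sum_nonneg fun c _ => by positivity
  have hlog : 0 ≤ Real.log X := Real.log_nonneg hX1
  have hEnn : (0:ℝ) ≤ 2 / Q * (1 + Real.log X) := by positivity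
  have hsum3 : (s.card : ℝ) ≤ 135 * X ^ 3 * ((2 / Q * (1 + Real.log X)) * (2 / Q * (1 + Real.log X))) := by
    rw [hsum2] at hsum1
    refine le_trans hsum1 ?_
    exact mul_le_mul_of_nonneg_left (mul_le_mul hDsum hDsum hDnonneg hEnn) (by positivity)
  -- final rpow arithmetic
  have hrp1 : (1:ℝ) ≤ X ^ (ε/2 : ℝ) := Real.one_le_rpow hX1 (by positivity)
  have hrp2 : Real.log X ≤ 2/ε * X ^ (ε/2 : ℝ) := by
    have h := Real.log_le_rpow_div hXpos.le (half_pos hε)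
    calc Real.log X ≤ X ^ (ε/2 : ℝ) / (ε/2) := h
      _ = 2/ε * X ^ (ε/2 : ℝ) := by field_simp
  have h5 : 1 + Real.log X ≤ (1 + 2/ε) * X ^ (ε/2 : ℝ) := by nlinarith
  have hsq : (1 + Real.log X)^2 ≤ (1 + 2/ε)^2 * X ^ (ε : ℝ) := by
    have h := pow_le_pow_left₀ (by linarith) h5 2
    have hXe : (X ^ (ε/2 : ℝ))^2 = X ^ (ε : ℝ) := by
      rw [← Real.rpow_natCast (X ^ (ε/2 : ℝ)) 2, ← Real.rpow_mul hXpos.le]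
      norm_num
    calc (1 + Real.log X)^2 ≤ ((1 + 2/ε) * X ^ (ε/2 : ℝ))^2 := h
      _ = (1 + 2/ε)^2 * (X ^ (ε/2 : ℝ))^2 := by ring
      _ = (1 + 2/ε)^2 * X ^ (ε : ℝ) := by rw [hXe]
  have hX3 : X ^ (3:ℕ) * X ^ (ε:ℝ) = X ^ (3 + ε : ℝ) := by
    rw [← Real.rpow_natCast X 3, ← Real.rpow_add hXpos]
    norm_num
  refine le_trans hsum3 ?_
  have hfinal : 135 * X ^ 3 * ((2 / Q * (1 + Real.log X)) * (2 / Q * (1 + Real.log X)))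
      = 540 * (X ^ 3 * (1 + Real.log X)^2) / (Q:ℝ)^2 := by
    field_simp
    ring
  rw [hfinal]
  have hcore : X ^ 3 * (1 + Real.log X)^2 ≤ (1 + 2/ε)^2 * X ^ (3 + ε : ℝ) := by
    calc X ^ 3 * (1 + Real.log X)^2 ≤ X ^ 3 * ((1 + 2/ε)^2 * X ^ (ε:ℝ)) :=
          mul_le_mul_of_nonneg_left hsq (by positivity)
      _ = (1 + 2/ε)^2 * (X ^ 3 * X ^ (ε:ℝ)) := by ring
      _ = (1 + 2/ε)^2 * X ^ (3 + ε : ℝ) := by rw [← hX3]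
  calc 540 * (X ^ 3 * (1 + Real.log X)^2) / (Q:ℝ)^2
      ≤ 540 * ((1 + 2/ε)^2 * X ^ (3 + ε : ℝ)) / (Q:ℝ)^2 := by gcongr
    _ = 540 * (1 + 2/ε)^2 * X ^ (3 + ε) / (Q:ℝ)^2 := by ring
end

section
/- There is a constant c > 0 such that for all sufficiently large X, the number of matrices A ∈ SL₂(ℤ) with height at most X satisfying A³ = I is at least cX. Consequently, for each s ≥ 1 the number of s-tuples (A₁,...,A_s) ∈ SL₂(ℤ)^s of matrices of height at most X that do not freely generate a free group is at least c' X^{2s-1} for some constant c' > 0. -/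
set_option linter.unusedSectionVars false

open Finset

private lemma sum_inv_sq' (n : ℕ) (hn : 2 ≤ n) :
    (∑ d ∈ Finset.Icc 2 n, (1:ℝ)/(d:ℝ)^2) ≤ 3/4 - 1/(n:ℝ) := by
  induction n, hn using Nat.le_induction with
  | base => norm_num
  | succ n hn ih =>
    rw [Finset.sum_Icc_succ_top (by omega : 2 ≤ n + 1)]
    have hn1 : (2:ℝ) ≤ (n:ℝ) := by exact_mod_cast hn
    push_cast
    have : (1:ℝ)/((n:ℝ)+1)^2 ≤ 1/(n:ℝ) - 1/((n:ℝ)+1) := by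
      rw [div_sub_div _ _ (by linarith) (by linarith)]
      rw [div_le_div_iff₀ (by positivity) (by positivity)]
      ring_nf
      nlinarith
    linarith

private lemma sum_inv_sq (n : ℕ) : (∑ d ∈ Finset.Icc 2 n, (1:ℝ)/(d:ℝ)^2) ≤ 3/4 := by
  rcases le_or_gt n 1 with h | h
  · interval_cases n <;> norm_num
  · have h2 : (0:ℝ) < 1/(n:ℝ) := by positivity
    linarith [sum_inv_sq' n h]


open Finset

def cop (n : ℕ) : Finset (ℕ × ℕ) :=
  (Finset.Icc 1 n ×ˢ Finset.Icc 1 n).filter fun p => Nat.Coprime p.1 p.2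

lemma mem_cop {n : ℕ} {p : ℕ × ℕ} (hp : p ∈ cop n) :
    1 ≤ p.1 ∧ p.1 ≤ n ∧ 1 ≤ p.2 ∧ p.2 ≤ n ∧ Nat.Coprime p.1 p.2 := by
  simp only [cop, Finset.mem_filter, Finset.mem_product, Finset.mem_Icc] at hp
  tauto

lemma cop_card (n : ℕ) : ((n:ℝ)^2)/4 ≤ ((cop n).card : ℝ) := by
  classical
  set T := Finset.Icc 1 n ×ˢ Finset.Icc 1 n with hT
  have hTcard : T.card = n^2 := by
    simp [hT, Nat.card_Icc, sq]
  set N := T.filter (fun p => ¬ Nat.Coprime p.1 p.2) with hN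
  have hsplit : (cop n).card + N.card = T.card := by
    rw [cop, hN]
    exact Finset.card_filter_add_card_filter_not _
  -- inject N into sigma-type-ish target
  have hNle : N.card ≤ ∑ d ∈ Finset.Icc 2 n, (n / d)^2 := by
    have hinj : N.card ≤ ((Finset.Icc 2 n).biUnion
        (fun d => {d} ×ˢ (Finset.Icc 1 (n/d) ×ˢ Finset.Icc 1 (n/d)))).card := by
      apply Finset.card_le_card_of_injOn
        (fun p => (Nat.gcd p.1 p.2, (p.1 / Nat.gcd p.1 p.2, p.2 / Nat.gcd p.1 p.2)))
      · intro p hp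
        simp only [Finset.mem_coe, hN, hT, Finset.mem_filter, Finset.mem_product, Finset.mem_Icc] at hp
        obtain ⟨⟨⟨hx1, hxn⟩, hy1, hyn⟩, hnc⟩ := hp
        set g := Nat.gcd p.1 p.2 with hg
        have hgdvd1 : g ∣ p.1 := Nat.gcd_dvd_left _ _
        have hgdvd2 : g ∣ p.2 := Nat.gcd_dvd_right _ _
        have hg2 : 2 ≤ g := by
          rcases Nat.lt_or_ge g 2 with h | h
          · interval_cases g
            · exact absurd (by simpa [hg] using (Nat.gcd_eq_zero_iff.mp hg.symm)) (by omega)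
            · exact absurd hg.symm hnc
          · exact h
        have hgx : g ≤ p.1 := Nat.le_of_dvd (by omega) hgdvd1
        simp only [Finset.mem_coe, Finset.mem_biUnion, Finset.mem_product, Finset.mem_Icc, Finset.mem_singleton]
        refine ⟨g, ⟨hg2, le_trans hgx hxn⟩, rfl, ⟨?_, ?_⟩, ?_, ?_⟩
        · exact (Nat.one_le_div_iff (by omega)).mpr hgx
        · exact Nat.div_le_div_right hxn
        · exact (Nat.one_le_div_iff (by omega)).mpr (Nat.le_of_dvd (by omega) hgdvd2)
        · exact Nat.div_le_div_right hyn
      · intro p hp q hq heq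
        simp only [Finset.mem_coe, hN, hT, Finset.mem_filter, Finset.mem_product, Finset.mem_Icc] at hp hq
        have h1 : Nat.gcd p.1 p.2 = Nat.gcd q.1 q.2 := congrArg Prod.fst heq
        have h2 := congrArg (fun z => z.2.1) heq
        have h3 := congrArg (fun z => z.2.2) heq
        simp only at h2 h3
        have e1 : p.1 = q.1 := by
          rw [← Nat.mul_div_cancel' (Nat.gcd_dvd_left p.1 p.2),
              ← Nat.mul_div_cancel' (Nat.gcd_dvd_left q.1 q.2), h2, h1]
        have e2 : p.2 = q.2 := by
          rw [← Nat.mul_div_cancel' (Nat.gcd_dvd_right p.1 p.2),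
              ← Nat.mul_div_cancel' (Nat.gcd_dvd_right q.1 q.2), h3, h1]
        exact Prod.ext e1 e2
    refine le_trans hinj (le_trans (Finset.card_biUnion_le) ?_)
    apply Finset.sum_le_sum
    intro d _
    simp [Nat.card_Icc, sq]
  -- real estimates
  have hsum : ((∑ d ∈ Finset.Icc 2 n, (n / d)^2 : ℕ) : ℝ) ≤ 3/4 * (n:ℝ)^2 := by
    push_cast
    have : ∀ d ∈ Finset.Icc 2 n, ((n / d : ℕ) : ℝ)^2 ≤ (n:ℝ)^2 * (1/(d:ℝ)^2) := by
      intro d hd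
      simp only [Finset.mem_Icc] at hd
      have hd0 : (0:ℝ) < (d:ℝ) := by exact_mod_cast (by omega : 0 < d)
      have h1 : ((n / d : ℕ) : ℝ) ≤ (n:ℝ)/(d:ℝ) := by
        rw [le_div_iff₀ hd0]
        exact_mod_cast Nat.div_mul_le_self n d
      have h0 : (0:ℝ) ≤ ((n / d : ℕ) : ℝ) := by positivity
      calc ((n / d : ℕ) : ℝ)^2 ≤ ((n:ℝ)/(d:ℝ))^2 := by nlinarith
        _ = (n:ℝ)^2 * (1/(d:ℝ)^2) := by field_simp
    calc (∑ d ∈ Finset.Icc 2 n, ((n / d : ℕ):ℝ)^2)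
        ≤ ∑ d ∈ Finset.Icc 2 n, (n:ℝ)^2 * (1/(d:ℝ)^2) := Finset.sum_le_sum this
      _ = (n:ℝ)^2 * ∑ d ∈ Finset.Icc 2 n, (1/(d:ℝ)^2) := by rw [Finset.mul_sum]
      _ ≤ (n:ℝ)^2 * (3/4) := by
          apply mul_le_mul_of_nonneg_left (sum_inv_sq n) (by positivity)
      _ = 3/4 * (n:ℝ)^2 := by ring
  have hcop : ((cop n).card : ℝ) = (n:ℝ)^2 - (N.card : ℝ) := by
    have h := hsplit
    rw [hTcard] at h
    have := congrArg (Nat.cast : ℕ → ℝ) h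
    push_cast at this
    linarith
  rw [hcop]
  have : (N.card : ℝ) ≤ 3/4*(n:ℝ)^2 := le_trans (by exact_mod_cast hNle) hsum
  linarith


open Finset Matrix

abbrev SL2 := Matrix.SpecialLinearGroup (Fin 2) ℤ

def bval (p : ℕ × ℕ) : ℕ := p.1^2 + p.1*p.2 + p.2^2
def aval (p : ℕ × ℕ) : ℕ := ((p.1 : ZMod (bval p)) * (p.2 : ZMod (bval p))⁻¹).val
def cval (p : ℕ × ℕ) : ℕ := (aval p ^ 2 + aval p + 1) / bval p

section good
variable {p : ℕ × ℕ} (hx : 1 ≤ p.1) (hy : 1 ≤ p.2) (hco : Nat.Coprime p.1 p.2)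

include hx hy in
lemma bval_pos : 0 < bval p := by
  have : 1 ≤ p.1^2 := Nat.one_le_pow _ _ hx
  simp only [bval]; omega

include hx hy hco in
lemma coprime_y_b : Nat.Coprime p.2 (bval p) := by
  have h1 : Nat.Coprime p.2 (p.1^2) := (hco.symm).pow_right 2
  have h2 : Nat.Coprime p.2 (p.1^2 + p.2 * (p.1 + p.2)) :=
    (Nat.coprime_add_mul_left_right _ _ _).mpr h1
  have : p.1^2 + p.2 * (p.1 + p.2) = bval p := by simp only [bval]; ring
  rwa [this] at h2

include hx hy hco in
lemma aval_mul_y (_ : NeZero (bval p)) :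
    ((aval p : ZMod (bval p)) * (p.2 : ZMod (bval p))) = (p.1 : ZMod (bval p)) := by
  have hu : IsUnit ((p.2 : ZMod (bval p))) :=
    (ZMod.isUnit_iff_coprime _ _).mpr (coprime_y_b hx hy hco)
  have hv : ((aval p : ℕ) : ZMod (bval p))
      = (p.1 : ZMod (bval p)) * (p.2 : ZMod (bval p))⁻¹ :=
    ZMod.natCast_rightInverse _
  rw [hv, mul_assoc, ZMod.inv_mul_of_unit _ hu, mul_one]

include hx hy hco in
lemma bval_dvd : bval p ∣ aval p ^ 2 + aval p + 1 := by
  haveI : NeZero (bval p) := ⟨Nat.pos_iff_ne_zero.mp (bval_pos hx hy)⟩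
  have key := aval_mul_y hx hy hco ‹_›
  rw [← ZMod.natCast_eq_zero_iff]
  have hu : IsUnit ((p.2 : ZMod (bval p))) :=
    (ZMod.isUnit_iff_coprime _ _).mpr (coprime_y_b hx hy hco)
  set α := (aval p : ZMod (bval p)) with hα
  set u := (p.2 : ZMod (bval p)) with huu
  have h0 : (α^2 + α + 1) * u^2 = 0 := by
    have : (α^2 + α + 1) * u^2 = (α*u)^2 + (α*u)*u + u^2 := by ring
    rw [this, key]
    have : ((p.1 : ZMod (bval p)))^2 + (p.1 : ZMod (bval p))*u + u^2
        = ((bval p : ℕ) : ZMod (bval p)) := by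
      rw [huu]; show _ = ((p.1^2 + p.1*p.2 + p.2^2 : ℕ) : ZMod (bval p)); push_cast; ring
    rw [this, ZMod.natCast_self]
  have hinv : (α^2 + α + 1) = (α^2 + α + 1) * u^2 * (u⁻¹)^2 := by
    rw [mul_assoc, ← mul_pow, ZMod.mul_inv_of_unit _ hu, one_pow, mul_one]
  rw [show ((aval p ^ 2 + aval p + 1 : ℕ) : ZMod (bval p)) = α^2 + α + 1 by push_cast; ring]
  rw [hinv, h0, zero_mul]
end good

def mat1 (p : ℕ × ℕ) : Matrix (Fin 2) (Fin 2) ℤ :=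
  !![(aval p : ℤ), -(bval p : ℤ); (cval p : ℤ), -1 - (aval p : ℤ)]

noncomputable def sl1 (p : ℕ × ℕ) : SL2 :=
  if h : bval p ∣ aval p ^ 2 + aval p + 1 then
    ⟨mat1 p, by
      have hbc : (bval p : ℤ) * (cval p : ℤ) = (aval p : ℤ)^2 + (aval p : ℤ) + 1 := by
        have := Nat.div_mul_cancel h
        exact_mod_cast by
          rw [mul_comm]
          exact_mod_cast congrArg (Nat.cast : ℕ → ℤ) (by rw [cval]; exact this)
      rw [mat1, Matrix.det_fin_two_of]
      ring_nf
      linarith [hbc]⟩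
  else 1

section good2
variable {p : ℕ × ℕ} (hx : 1 ≤ p.1) (hy : 1 ≤ p.2) (hco : Nat.Coprime p.1 p.2)

include hx hy hco in
lemma sl1_eq : (sl1 p : Matrix (Fin 2) (Fin 2) ℤ) = mat1 p := by
  rw [sl1]; exact congrArg Subtype.val (dif_pos (bval_dvd hx hy hco))

include hx hy hco in
lemma sl1_cube : (sl1 p) ^ 3 = 1 := by
  have hbc : (bval p : ℤ) * (cval p : ℤ) = (aval p : ℤ)^2 + (aval p : ℤ) + 1 := by
    have := Nat.div_mul_cancel (bval_dvd hx hy hco)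
    exact_mod_cast congrArg (Nat.cast : ℕ → ℤ) (by rw [mul_comm]; rw [cval]; exact this)
  apply Subtype.ext
  rw [Matrix.SpecialLinearGroup.coe_pow, Matrix.SpecialLinearGroup.coe_one,
    sl1_eq hx hy hco]
  set M := mat1 p with hM
  have h2 : M * M = -M - 1 := by
    ext i j
    fin_cases i <;> fin_cases j <;>
      simp [hM, mat1, Matrix.mul_apply, Fin.sum_univ_succ] <;> nlinarith [hbc]
  have h3 : M ^ 3 = M * M * M := by rw [pow_succ, pow_two]
  rw [h3, h2, sub_mul, neg_mul, h2, one_mul]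
  abel
end good2

section good3
variable {p : ℕ × ℕ} (hx : 1 ≤ p.1) (hy : 1 ≤ p.2) (hco : Nat.Coprime p.1 p.2)

include hx hy in
lemma aval_lt : aval p < bval p := by
  haveI : NeZero (bval p) := ⟨Nat.pos_iff_ne_zero.mp (bval_pos hx hy)⟩
  exact ZMod.val_lt _

include hx hy hco in
lemma cval_le : cval p ≤ bval p := by
  have ha := aval_lt hx hy (p := p)
  have hb := bval_pos hx hy (p := p)
  rw [cval]
  have h1 : aval p ^2 + aval p + 1 ≤ bval p * bval p := by nlinarith
  calc (aval p ^2 + aval p + 1) / bval p ≤ (bval p * bval p) / bval p :=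
        Nat.div_le_div_right h1
    _ = bval p := Nat.mul_div_cancel_left _ hb

include hx hy in
lemma xsq_lt_bval : p.1^2 < bval p := by
  have : 1 ≤ p.1 * p.2 := Nat.one_le_iff_ne_zero.mpr (by positivity)
  simp only [bval]
  have : 1 ≤ p.2^2 := Nat.one_le_pow _ _ hy
  omega

include hx hy in
lemma ysq_lt_bval : p.2^2 < bval p := by
  have : 1 ≤ p.1 * p.2 := Nat.one_le_iff_ne_zero.mpr (by positivity)
  have : 1 ≤ p.1^2 := Nat.one_le_pow _ _ hx
  simp only [bval]; omega
end good3

section good4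
variable {p : ℕ × ℕ} (hx : 1 ≤ p.1) (hy : 1 ≤ p.2) (hco : Nat.Coprime p.1 p.2)

include hx hy hco in
lemma aval_modeq : aval p * p.2 ≡ p.1 [MOD bval p] := by
  haveI : NeZero (bval p) := ⟨Nat.pos_iff_ne_zero.mp (bval_pos hx hy)⟩
  rw [← ZMod.natCast_eq_natCast_iff]
  push_cast
  exact aval_mul_y hx hy hco ‹_›
end good4

lemma sl1_inj {p q : ℕ × ℕ}
    (hx : 1 ≤ p.1) (hy : 1 ≤ p.2) (hco : Nat.Coprime p.1 p.2)
    (hx' : 1 ≤ q.1) (hy' : 1 ≤ q.2) (hco' : Nat.Coprime q.1 q.2)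
    (heq : sl1 p = sl1 q) : p = q := by
  have hmat : mat1 p = mat1 q := by
    rw [← sl1_eq hx hy hco, ← sl1_eq hx' hy' hco', heq]
  have ha : aval p = aval q := by
    have := congrFun (congrFun (congrArg (fun M => M) hmat) 0) 0
    simp [mat1] at this
    exact_mod_cast this
  have hb : bval p = bval q := by
    have := congrFun (congrFun (congrArg (fun M => M) hmat) 0) 1
    simp [mat1] at this
    exact_mod_cast this
  -- congruences
  have k1 : aval p * p.2 ≡ p.1 [MOD bval p] := aval_modeq hx hy hco
  have k2 : aval p * q.2 ≡ q.1 [MOD bval p] := by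
    rw [ha, hb]; exact aval_modeq hx' hy' hco'
  have k3 : p.1 * q.2 ≡ q.1 * p.2 [MOD bval p] := by
    calc p.1 * q.2 ≡ (aval p * p.2) * q.2 [MOD bval p] := (k1.symm.mul_right _)
      _ = (aval p * q.2) * p.2 := by ring
      _ ≡ q.1 * p.2 [MOD bval p] := k2.mul_right _
  have hxy1 : p.1 * q.2 < bval p := by
    have h1 := xsq_lt_bval hx hy (p := p)
    have h2 : q.2^2 < bval p := by rw [hb]; exact ysq_lt_bval hx' hy' (p := q)
    by_contra hcon
    push_neg at hcon
    have := Nat.pow_le_pow_left hcon 2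
    nlinarith
  have hxy2 : q.1 * p.2 < bval p := by
    have h1 : q.1^2 < bval p := by rw [hb]; exact xsq_lt_bval hx' hy' (p := q)
    have h2 := ysq_lt_bval hx hy (p := p)
    by_contra hcon
    push_neg at hcon
    have := Nat.pow_le_pow_left hcon 2
    nlinarith
  have hcross : p.1 * q.2 = q.1 * p.2 := by
    have := k3
    rwa [Nat.ModEq, Nat.mod_eq_of_lt hxy1, Nat.mod_eq_of_lt hxy2] at this
  have hd1 : p.1 ∣ q.1 := by
    have : p.1 ∣ q.1 * p.2 := ⟨q.2, hcross.symm⟩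
    exact (Nat.Coprime.dvd_of_dvd_mul_right hco this)
  have hd2 : q.1 ∣ p.1 := by
    have : q.1 ∣ p.1 * q.2 := ⟨p.2, hcross⟩
    exact (Nat.Coprime.dvd_of_dvd_mul_right hco' this)
  have e1 : p.1 = q.1 := Nat.dvd_antisymm hd1 hd2
  have e2 : p.2 = q.2 := by
    have := hcross
    rw [e1] at this
    exact (Nat.eq_of_mul_eq_mul_left (by omega) this.symm)
  exact Prod.ext e1 e2

open Matrix

def dval (p : ℕ × ℕ) : ℕ := ((p.1 : ZMod p.2)⁻¹).val
def ccval (p : ℕ × ℕ) : ℤ := ((p.1 : ℤ) * (dval p : ℤ) - 1) / (p.2 : ℤ)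

section g
variable {p : ℕ × ℕ} (hx : 1 ≤ p.1) (hy : 1 ≤ p.2) (hco : Nat.Coprime p.1 p.2)

include hx hy hco in
lemma dvd_dval : (p.2:ℤ) ∣ ((p.1:ℤ) * (dval p : ℤ) - 1) := by
  haveI : NeZero p.2 := ⟨by omega⟩
  have hu : IsUnit ((p.1 : ZMod p.2)) := (ZMod.isUnit_iff_coprime _ _).mpr hco
  have h1 : ((p.1 * dval p : ℕ) : ZMod p.2) = ((1 : ℕ) : ZMod p.2) := by
    push_cast
    rw [dval, ZMod.natCast_rightInverse, ZMod.mul_inv_of_unit _ hu]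
  have h2 : (p.1 * dval p) ≡ 1 [MOD p.2] := (ZMod.natCast_eq_natCast_iff _ _ _).mp h1
  have := (Nat.ModEq.dvd h2)
  -- this : (p.2:ℤ) ∣ 1 - (p.1*dval p)
  have := dvd_neg.mpr this
  push_cast at this ⊢
  rwa [neg_sub] at this

include hx hy hco in
lemma ccval_eq : (p.2:ℤ) * ccval p = (p.1:ℤ) * (dval p : ℤ) - 1 :=
  Int.mul_ediv_cancel' (dvd_dval hx hy hco)

def mat2 (p : ℕ × ℕ) : Matrix (Fin 2) (Fin 2) ℤ :=
  !![(p.1:ℤ), (p.2:ℤ); ccval p, (dval p : ℤ)]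

include hx hy in
lemma dval_lt : dval p < p.2 := by
  haveI : NeZero p.2 := ⟨by omega⟩
  exact ZMod.val_lt _

include hx hy hco in
lemma ccval_bounds : -1 ≤ ccval p ∧ ccval p ≤ (p.1:ℤ) := by
  have h := ccval_eq hx hy hco
  have hd : (dval p : ℤ) ≤ (p.2:ℤ) - 1 := by
    have := dval_lt hx hy (p := p); omega
  have hy' : (1:ℤ) ≤ (p.2:ℤ) := by exact_mod_cast hy
  have hx' : (1:ℤ) ≤ (p.1:ℤ) := by exact_mod_cast hx
  have hd0 : (0:ℤ) ≤ (dval p : ℤ) := by positivity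
  constructor
  · nlinarith [h]
  · nlinarith [h]
end g

noncomputable def sl2m (p : ℕ × ℕ) : SL2 :=
  if h : (p.2:ℤ) ∣ ((p.1:ℤ) * (dval p : ℤ) - 1) then
    ⟨mat2 p, by
      have hbc := Int.mul_ediv_cancel' h
      rw [mat2, Matrix.det_fin_two_of]
      show (p.1:ℤ) * (dval p : ℤ) - (p.2:ℤ) * ccval p = 1
      rw [ccval] at *
      omega⟩
  else 1

lemma sl2m_eq {p : ℕ × ℕ} (hx : 1 ≤ p.1) (hy : 1 ≤ p.2) (hco : Nat.Coprime p.1 p.2) :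
    (sl2m p : Matrix (Fin 2) (Fin 2) ℤ) = mat2 p := by
  rw [sl2m]; exact congrArg Subtype.val (dif_pos (dvd_dval hx hy hco))

lemma sl2m_inj {p q : ℕ × ℕ}
    (hx : 1 ≤ p.1) (hy : 1 ≤ p.2) (hco : Nat.Coprime p.1 p.2)
    (hx' : 1 ≤ q.1) (hy' : 1 ≤ q.2) (hco' : Nat.Coprime q.1 q.2)
    (heq : sl2m p = sl2m q) : p = q := by
  have hmat : mat2 p = mat2 q := by
    rw [← sl2m_eq hx hy hco, ← sl2m_eq hx' hy' hco', heq]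
  have h1 := congrFun (congrFun (congrArg (fun M => M) hmat) 0) 0
  have h2 := congrFun (congrFun (congrArg (fun M => M) hmat) 0) 1
  simp [mat2] at h1 h2
  exact Prod.ext (by exact_mod_cast h1) (by exact_mod_cast h2)

open Matrix

lemma finite_height (X : ℝ) :
    {A : SL2 | ∀ i j, (|A.1 i j| : ℝ) ≤ X}.Finite := by
  classical
  set B : ℤ := ⌈X⌉ with hB
  have hfin : (Set.Icc (-B) B ×ˢ Set.Icc (-B) B ×ˢ Set.Icc (-B) B ×ˢ Set.Icc (-B) B :
      Set (ℤ × ℤ × ℤ × ℤ)).Finite :=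
    (Set.finite_Icc _ _).prod ((Set.finite_Icc _ _).prod
      ((Set.finite_Icc _ _).prod (Set.finite_Icc _ _)))
  set f : SL2 → ℤ × ℤ × ℤ × ℤ := fun A => (A.1 0 0, A.1 0 1, A.1 1 0, A.1 1 1) with hf
  have hinj : Function.Injective f := by
    intro A A' h
    simp only [hf, Prod.mk.injEq] at h
    apply Subtype.ext
    ext i j
    fin_cases i <;> fin_cases j <;> tauto
  apply Set.Finite.subset (hfin.preimage (hinj.injOn))
  intro A hA
  simp only [Set.mem_setOf_eq] at hA
  have key : ∀ i j, -B ≤ A.1 i j ∧ A.1 i j ≤ B := by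
    intro i j
    have h1 := hA i j
    have h2 : (X : ℝ) ≤ (B : ℝ) := by rw [hB]; exact_mod_cast Int.le_ceil X
    have h3 : |(A.1 i j : ℝ)| ≤ (B:ℝ) := by
      rw [← Int.cast_abs] at h1 ⊢
      · exact le_trans h1 h2
    rw [abs_le] at h3
    exact ⟨by exact_mod_cast h3.1, by exact_mod_cast h3.2⟩
  simp only [Set.mem_preimage, hf, Set.mem_prod, Set.mem_Icc]
  exact ⟨⟨(key 0 0).1, (key 0 0).2⟩, ⟨(key 0 1).1, (key 0 1).2⟩,
    ⟨(key 1 0).1, (key 1 0).2⟩, ⟨(key 1 1).1, (key 1 1).2⟩⟩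

lemma card_le_ncard {α : Type*} {F : Finset α} {S : Set α} (h : ↑F ⊆ S) (hS : S.Finite) :
    F.card ≤ S.ncard := by
  calc F.card = (↑F : Set α).ncard := (Set.ncard_coe_finset F).symm
    _ ≤ S.ncard := Set.ncard_le_ncard h hS

lemma F1_exists (X : ℝ) (hX : 100 ≤ X) :
    ∃ F : Finset SL2, X/64 ≤ (F.card : ℝ) ∧
      ∀ a ∈ F, (∀ i j, (|a.1 i j| : ℝ) ≤ X) ∧ a ^ 3 = 1 := by
  classical
  set n : ℕ := ⌊Real.sqrt X / 2⌋₊ with hn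
  have hX0 : (0:ℝ) ≤ X := by linarith
  have hs : Real.sqrt X * Real.sqrt X = X := Real.mul_self_sqrt hX0
  have hs10 : (10:ℝ) ≤ Real.sqrt X := by
    have := Real.sqrt_le_sqrt hX
    calc (10:ℝ) = Real.sqrt 100 := by
          rw [show (100:ℝ) = 10^2 by norm_num, Real.sqrt_sq (by norm_num)]
      _ ≤ Real.sqrt X := Real.sqrt_le_sqrt hX
  have hnle : (n:ℝ) ≤ Real.sqrt X / 2 := Nat.floor_le (by positivity)
  have hnge : Real.sqrt X / 4 ≤ (n:ℝ) := by
    have h1 : Real.sqrt X / 2 < (n:ℝ) + 1 := Nat.lt_floor_add_one _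
    linarith
  refine ⟨(cop n).image sl1, ?_, ?_⟩
  · have hcard : ((cop n).image sl1).card = (cop n).card := by
      apply Finset.card_image_of_injOn
      intro p hp q hq heq
      obtain ⟨hx, _, hy, _, hco⟩ := mem_cop hp
      obtain ⟨hx', _, hy', _, hco'⟩ := mem_cop hq
      exact sl1_inj hx hy hco hx' hy' hco' heq
    rw [hcard]
    have h1 := cop_card n
    have h2 : X/16 ≤ (n:ℝ)^2 := by nlinarith
    linarith
  · intro a ha
    obtain ⟨p, hp, rfl⟩ := Finset.mem_image.mp ha
    obtain ⟨hx, hxn, hy, hyn, hco⟩ := mem_cop hp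
    have hbX : (bval p : ℝ) ≤ X := by
      have h1 : (bval p : ℝ) ≤ 3 * (n:ℝ)^2 := by
        have : bval p ≤ 3 * n^2 := by
          have e1 : p.1 ≤ n := hxn
          have e2 : p.2 ≤ n := hyn
          simp only [bval]
          nlinarith
        exact_mod_cast this
      nlinarith
    have ha3 := sl1_cube hx hy hco
    have hav : aval p < bval p := aval_lt hx hy
    have hcv : cval p ≤ bval p := cval_le hx hy hco
    refine ⟨?_, ha3⟩
    intro i j
    rw [sl1_eq hx hy hco]
    have hb0 : (0:ℝ) ≤ (bval p : ℝ) := by positivity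
    have hA : (aval p : ℝ) < (bval p:ℝ) := by exact_mod_cast hav
    have hC : (cval p : ℝ) ≤ (bval p:ℝ) := by exact_mod_cast hcv
    have hA0 : (0:ℝ) ≤ (aval p : ℝ) := by positivity
    have hA1 : (aval p : ℝ) + 1 ≤ (bval p : ℝ) := by exact_mod_cast hav
    have hC0 : (0:ℝ) ≤ (cval p : ℝ) := by positivity
    fin_cases i <;> fin_cases j <;>
      simp [mat1, abs_le] <;> push_cast <;> (try constructor) <;> linarith

lemma F2_exists (X : ℝ) (hX : 100 ≤ X) :
    ∃ F : Finset SL2, X^2/8 ≤ (F.card : ℝ) ∧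
      ∀ a ∈ F, ∀ i j, (|a.1 i j| : ℝ) ≤ X := by
  classical
  set m : ℕ := ⌊X⌋₊ with hm
  have hX0 : (0:ℝ) ≤ X := by linarith
  have hmle : (m:ℝ) ≤ X := Nat.floor_le hX0
  have hmge : X - 1 ≤ (m:ℝ) := by
    have := Nat.lt_floor_add_one X
    linarith
  refine ⟨(cop m).image sl2m, ?_, ?_⟩
  · have hcard : ((cop m).image sl2m).card = (cop m).card := by
      apply Finset.card_image_of_injOn
      intro p hp q hq heq
      obtain ⟨hx, _, hy, _, hco⟩ := mem_cop hp
      obtain ⟨hx', _, hy', _, hco'⟩ := mem_cop hq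
      exact sl2m_inj hx hy hco hx' hy' hco' heq
    rw [hcard]
    have h1 := cop_card m
    have h2 : X^2/2 ≤ (m:ℝ)^2 := by nlinarith
    linarith
  · intro a ha
    obtain ⟨p, hp, rfl⟩ := Finset.mem_image.mp ha
    obtain ⟨hx, hxm, hy, hym, hco⟩ := mem_cop hp
    intro i j
    rw [sl2m_eq hx hy hco]
    have hu : (p.1 : ℝ) ≤ X := le_trans (by exact_mod_cast hxm) hmle
    have hv : (p.2 : ℝ) ≤ X := le_trans (by exact_mod_cast hym) hmle
    have hu0 : (0:ℝ) ≤ (p.1:ℝ) := by positivity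
    have hv0 : (0:ℝ) ≤ (p.2:ℝ) := by positivity
    have hd : (dval p : ℝ) + 1 ≤ (p.2 : ℝ) + 1 := by
      have := dval_lt hx hy (p := p)
      have : (dval p : ℝ) ≤ (p.2:ℝ) := by exact_mod_cast le_of_lt this
      linarith
    have hd0 : (0:ℝ) ≤ (dval p : ℝ) := by positivity
    obtain ⟨hc1, hc2⟩ := ccval_bounds hx hy hco
    have hc1' : (-1:ℝ) ≤ (ccval p : ℝ) := by exact_mod_cast hc1
    have hc2' : (ccval p : ℝ) ≤ (p.1:ℝ) := by exact_mod_cast hc2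
    fin_cases i <;> fin_cases j <;>
      simp [mat2, abs_le] <;> push_cast <;> (try constructor) <;> linarith

/-- A tuple `(A₁, …, A_s)` is non-free: some nonempty reduced word in the `A_i^{±1}`
equals the identity. -/
def IsNonFreeTuple {s : ℕ} (A : Fin s → Matrix.SpecialLinearGroup (Fin 2) ℤ) : Prop :=
  ∃ (m : ℕ), 1 ≤ m ∧ ∃ (ν : ℕ → Fin s) (e : ℕ → ℤ),
    (∀ i < m, e i = 1 ∨ e i = -1) ∧
    (∀ i, i + 1 < m → ¬(ν (i + 1) = ν i ∧ e (i + 1) = -e i)) ∧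
    ((List.range m).map (fun i => A (ν i) ^ e i)).prod = 1

lemma nonfree_of_cube {s : ℕ} (A : Fin s → SL2) (k : Fin s) (hk : A k ^ 3 = 1) :
    IsNonFreeTuple A := by
  refine ⟨3, by norm_num, fun _ => k, fun _ => 1, fun i _ => Or.inl rfl,
    fun i _ h => by simpa using h.2, ?_⟩
  have : List.range 3 = [0, 1, 2] := rfl
  rw [this]
  simp only [List.map_cons, List.map_nil, List.prod_cons, List.prod_nil, zpow_one, mul_one]
  rw [← hk, pow_succ, pow_succ, pow_one, mul_assoc]

/-- there is `c > 0` such that for all sufficiently large `X` the number of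
`A ∈ SL₂(ℤ)` of height at most `X` with `A³ = 1` is at least `cX`; consequently for each
`s ≥ 1` the number of non-free `s`-tuples of height at most `X` is `≫ X^{2s-1}`. -/
theorem stmt9 :
    (∃ c : ℝ, 0 < c ∧ ∃ X₀ : ℝ, ∀ X : ℝ, X₀ ≤ X →
      c * X ≤ ({A : Matrix.SpecialLinearGroup (Fin 2) ℤ |
          (∀ i j, (|A.1 i j| : ℝ) ≤ X) ∧ A ^ 3 = 1}.ncard : ℝ)) ∧
    ∀ s : ℕ, 1 ≤ s → ∃ c' : ℝ, 0 < c' ∧ ∃ X₁ : ℝ, ∀ X : ℝ, X₁ ≤ X →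
      c' * X ^ (2 * s - 1) ≤
        ({A : Fin s → Matrix.SpecialLinearGroup (Fin 2) ℤ |
            (∀ k, ∀ i j, (|(A k).1 i j| : ℝ) ≤ X) ∧ IsNonFreeTuple A}.ncard : ℝ) := by
  constructor
  · refine ⟨1/64, by norm_num, 100, fun X hX => ?_⟩
    obtain ⟨F, hF, hFmem⟩ := F1_exists X hX
    set S := {A : Matrix.SpecialLinearGroup (Fin 2) ℤ |
        (∀ i j, (|A.1 i j| : ℝ) ≤ X) ∧ A ^ 3 = 1} with hS
    have hSfin : S.Finite := by
      apply Set.Finite.subset (finite_height X)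
      intro A hA
      exact hA.1
    have hsub : ↑F ⊆ S := fun a ha => hFmem a ha
    have := card_le_ncard hsub hSfin
    have : (F.card : ℝ) ≤ (S.ncard : ℝ) := by exact_mod_cast this
    calc (1/64) * X = X/64 := by ring
      _ ≤ (F.card : ℝ) := hF
      _ ≤ _ := this
  · intro s hs
    obtain ⟨m, rfl⟩ : ∃ m, s = m + 1 := ⟨s - 1, by omega⟩
    refine ⟨1/(64 * 8^m), by positivity, 100, fun X hX => ?_⟩
    obtain ⟨F₁, hF₁, hF₁mem⟩ := F1_exists X hX
    obtain ⟨F₂, hF₂, hF₂mem⟩ := F2_exists X hX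
    classical
    set Dom : Finset (SL2 × (Fin m → SL2)) :=
      F₁ ×ˢ Fintype.piFinset (fun _ : Fin m => F₂) with hDom
    set G : Finset (Fin (m+1) → SL2) :=
      Dom.image (fun q => Fin.cons q.1 q.2) with hG
    have hGcard : G.card = F₁.card * F₂.card ^ m := by
      rw [hG, Finset.card_image_of_injOn, hDom, Finset.card_product,
        Fintype.card_piFinset]
      · simp
      · intro q _ r _ h
        have := Fin.cons_inj.mp h
        exact Prod.ext this.1 this.2
    set S := {A : Fin (m+1) → Matrix.SpecialLinearGroup (Fin 2) ℤ |
        (∀ k, ∀ i j, (|(A k).1 i j| : ℝ) ≤ X) ∧ IsNonFreeTuple A} with hS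
    have hSfin : S.Finite := by
      apply Set.Finite.subset (Set.Finite.pi (fun _ : Fin (m+1) => finite_height X))
      intro A hA
      simp only [Set.mem_pi, Set.mem_univ, forall_true_left]
      exact fun k => hA.1 k
    have hsub : ↑G ⊆ S := by
      intro A hA
      rw [hG] at hA
      simp only [Finset.coe_image, Set.mem_image, Finset.mem_coe] at hA
      obtain ⟨q, hq, rfl⟩ := hA
      rw [hDom, Finset.mem_product] at hq
      obtain ⟨hq1, hq2⟩ := hq
      have hq2' : ∀ i, q.2 i ∈ F₂ := by
        intro i
        exact Fintype.mem_piFinset.mp hq2 i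
      constructor
      · intro k
        refine Fin.cases ?_ ?_ k
        · rw [Fin.cons_zero]
          exact (hF₁mem q.1 hq1).1
        · intro i
          rw [Fin.cons_succ]
          exact hF₂mem _ (hq2' i)
      · apply nonfree_of_cube _ 0
        rw [Fin.cons_zero]
        exact (hF₁mem q.1 hq1).2
    have hle := card_le_ncard hsub hSfin
    have hle' : (G.card : ℝ) ≤ (S.ncard : ℝ) := by exact_mod_cast hle
    have hGcard' : (G.card : ℝ) = (F₁.card : ℝ) * (F₂.card : ℝ) ^ m := by
      rw [hGcard]; push_cast; ring
    have hexp : 2 * (m+1) - 1 = 2*m + 1 := by omega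
    rw [hexp]
    have hX0 : (0:ℝ) ≤ X := by linarith
    have key : (1/(64 * 8^m) : ℝ) * X ^ (2*m+1) ≤ (F₁.card : ℝ) * (F₂.card : ℝ) ^ m := by
      have h1 : (X^2/8 : ℝ) ^ m ≤ (F₂.card : ℝ) ^ m :=
        pow_le_pow_left₀ (by positivity) hF₂ m
      have h2 : (0:ℝ) ≤ X/64 := by positivity
      have h3 : (X/64) * (X^2/8)^m ≤ (F₁.card : ℝ) * (F₂.card : ℝ) ^ m := by
        apply mul_le_mul hF₁ h1 (by positivity) (by positivity)
      have hxp : X^(2*m+1) = X * (X^2)^m := by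
        rw [pow_succ', pow_mul]
      calc (1/(64 * 8^m) : ℝ) * X ^ (2*m+1) = (X/64) * (X^2/8)^m := by
            rw [hxp, div_pow]
            have h8 : (8:ℝ)^m ≠ 0 := by positivity
            field_simp
        _ ≤ _ := h3
    rw [hGcard'] at hle'
    linarith
end

section
/- The number of 2×2 integer matrices A = [[a,b],[c,d]] with a + d = -1, ad - bc = 1, and max(|a|,|b|,|c|,|d|) ≤ X is at least cX for some absolute constant c > 0 and all X ≥ 2. -/
open Finset

namespace Stmt11Aux

/-- canonical Bezout coefficients: for coprime `r s ≥ 1` we get `p*s - q*r = 1`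
with `0 ≤ q < s` and `1 ≤ p ≤ r`. -/
noncomputable def qq (r s : ℤ) : ℤ := (-(Int.gcdA r s)) % s

noncomputable def pp (r s : ℤ) : ℤ := (1 + qq r s * r) / s

lemma pq_spec (r s : ℤ) (hr : 1 ≤ r) (hs : 1 ≤ s) (h : Int.gcd r s = 1) :
    pp r s * s - qq r s * r = 1 ∧ 1 ≤ pp r s ∧ pp r s ≤ r ∧ 0 ≤ qq r s ∧ qq r s < s := by
  have hs0 : s ≠ 0 := by omega
  have hg : (1 : ℤ) = r * Int.gcdA r s + s * Int.gcdB r s := by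
    have := Int.gcd_eq_gcd_ab r s
    rw [h] at this; exact_mod_cast this
  set A := Int.gcdA r s with hA
  set B := Int.gcdB r s with hB
  have hq0 : qq r s = (-A) % s := rfl
  have hqnn : 0 ≤ qq r s := by rw [hq0]; exact Int.emod_nonneg _ hs0
  have hqlt : qq r s < s := by rw [hq0]; exact Int.emod_lt_of_pos _ (by omega)
  have hdvd : s ∣ (1 + qq r s * r) := by
    have h1 : (-A) % s = -A - s * ((-A) / s) := by rw [Int.emod_def]
    refine ⟨B - ((-A) / s) * r, ?_⟩
    rw [hq0, h1]
    linear_combination hg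
  have hps : pp r s * s = 1 + qq r s * r := by
    rw [pp]; exact Int.ediv_mul_cancel hdvd
  have hp1 : 1 ≤ pp r s := by nlinarith [hqnn, hqlt, hps]
  have hpr : pp r s ≤ r := by nlinarith [hqnn, hqlt, hps]
  refine ⟨by linarith [hps], hp1, hpr, hqnn, hqlt⟩

/-- the conjugation map: `(r,s) ↦ g M₀ g⁻¹` entries where `g = [[p,q],[r,s]]`. -/
noncomputable def F (x : ℕ × ℕ) : ℤ × ℤ × ℤ × ℤ :=
  (pp (x.1 : ℤ) (x.2 : ℤ) * (x.1 : ℤ) + qq (x.1 : ℤ) (x.2 : ℤ) * (x.1 : ℤ)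
      + qq (x.1 : ℤ) (x.2 : ℤ) * (x.2 : ℤ),
   -(pp (x.1 : ℤ) (x.2 : ℤ) * pp (x.1 : ℤ) (x.2 : ℤ)
      + pp (x.1 : ℤ) (x.2 : ℤ) * qq (x.1 : ℤ) (x.2 : ℤ)
      + qq (x.1 : ℤ) (x.2 : ℤ) * qq (x.1 : ℤ) (x.2 : ℤ)),
   (x.1 : ℤ) * (x.1 : ℤ) + (x.1 : ℤ) * (x.2 : ℤ) + (x.2 : ℤ) * (x.2 : ℤ),
   -(pp (x.1 : ℤ) (x.2 : ℤ) * (x.1 : ℤ) + pp (x.1 : ℤ) (x.2 : ℤ) * (x.2 : ℤ)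
      + qq (x.1 : ℤ) (x.2 : ℤ) * (x.2 : ℤ)))

set_option maxHeartbeats 1000000 in
/-- injectivity core: algebraic argument via the centralizer of M₀. -/
lemma inj_aux {p1 q1 r1 s1 p2 q2 r2 s2 : ℤ}
    (h1 : p1*s1 - q1*r1 = 1) (h2 : p2*s2 - q2*r2 = 1)
    (hr1 : 1 ≤ r1) (hs1 : 1 ≤ s1) (hr2 : 1 ≤ r2) (hs2 : 1 ≤ s2)
    (ha : p1*r1 + q1*r1 + q1*s1 = p2*r2 + q2*r2 + q2*s2)
    (hb : -(p1*p1 + p1*q1 + q1*q1) = -(p2*p2 + p2*q2 + q2*q2))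
    (hc : r1*r1 + r1*s1 + s1*s1 = r2*r2 + r2*s2 + s2*s2)
    (hd : -(p1*r1 + p1*s1 + q1*s1) = -(p2*r2 + p2*s2 + q2*s2)) :
    r1 = r2 ∧ s1 = s2 := by
  obtain ⟨α, hα⟩ : ∃ α : ℤ, α = s2*p1 - q2*r1 := ⟨_, rfl⟩
  obtain ⟨β, hβ⟩ : ∃ β : ℤ, β = s2*q1 - q2*s1 := ⟨_, rfl⟩
  obtain ⟨γ, hγ⟩ : ∃ γ : ℤ, γ = p2*r1 - r2*p1 := ⟨_, rfl⟩
  obtain ⟨δ, hδ⟩ : ∃ δ : ℤ, δ = p2*s1 - r2*q1 := ⟨_, rfl⟩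
  have e1 : β + γ = 0 := by
    rw [hβ, hγ]
    linear_combination (s2*p1)*ha + (s2*r1)*hb - (q2*p1)*hc - (q2*r1)*hd
      - (s2*q1 - q2*s1)*h1 - (p2*r1 - r2*p1)*h2
  have e2 : δ - α + γ = 0 := by
    rw [hα, hγ, hδ]
    linear_combination (-(r2*p1))*ha - (r2*r1)*hb + (p2*p1)*hc + (p2*r1)*hd
      - (p2*s1 - r2*q1)*h1 + ((s2*p1 - q2*r1) - (p2*r1 - r2*p1))*h2
  have e3 : α*δ - β*γ = 1 := by
    rw [hα, hβ, hγ, hδ]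
    linear_combination (p2*s2 - q2*r2)*h1 + h2
  have e4 : r1 = α*r2 + γ*s2 := by
    rw [hα, hγ]; linear_combination (-r1)*h2
  have e5 : s1 = β*r2 + δ*s2 := by
    rw [hβ, hδ]; linear_combination (-s1)*h2
  have hγβ : γ = -β := by omega
  have hδαβ : δ = α + β := by omega
  have key : α*α + α*β + β*β = 1 := by
    rw [hγβ, hδαβ] at e3; linear_combination e3
  have hβb1 : -1 ≤ β := by nlinarith [sq_nonneg (2*α + β)]
  have hβb2 : β ≤ 1 := by nlinarith [sq_nonneg (2*α + β)]
  have hαb1 : -1 ≤ α := by nlinarith [sq_nonneg (α + 2*β)]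
  have hαb2 : α ≤ 1 := by nlinarith [sq_nonneg (α + 2*β)]
  rw [hγβ] at e4
  rw [hδαβ] at e5
  interval_cases α <;> interval_cases β <;> omega

/-- the telescoping bound `∑_{d=2}^{n} 1/d² ≤ 25/36`. -/
lemma sum_inv_sq_le (n : ℕ) : ∑ d ∈ Finset.Icc 2 n, (1:ℝ)/(d:ℝ)^2 ≤ 25/36 := by
  rcases le_or_gt n 2 with hn | hn
  · interval_cases n <;> simp <;> norm_num
  · have main : ∀ m : ℕ, 3 ≤ m → ∑ d ∈ Finset.Icc 2 m, (1:ℝ)/(d:ℝ)^2 ≤ 25/36 - 1/(m:ℝ) := by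
      intro m hm
      induction m, hm using Nat.le_induction with
      | base => norm_num [Finset.sum_Icc_succ_top, show (2:ℕ) ≤ 3 by norm_num]
      | succ k hk ih =>
        rw [Finset.sum_Icc_succ_top (by omega)]
        have hk0 : (0:ℝ) < (k:ℝ) := by positivity
        have hk1 : (0:ℝ) < (k:ℝ) + 1 := by positivity
        have step : (1:ℝ)/((k:ℝ)+1)^2 ≤ 1/(k:ℝ) - 1/((k:ℝ)+1) := by
          rw [div_sub_div _ _ (ne_of_gt hk0) (ne_of_gt hk1), div_le_div_iff₀ (by positivity) (by positivity)]
          ring_nf; nlinarith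
        have := ih
        push_cast
        linarith
    have h3 : 3 ≤ n := hn
    have := main n h3
    have : ∑ d ∈ Finset.Icc 2 n, (1:ℝ)/(d:ℝ)^2 ≤ 25/36 - 1/(n:ℝ) := this
    have hn0 : (0:ℝ) < 1/(n:ℝ) := by positivity
    linarith

/-- coprime pairs count: at least `(11/36) N²`. -/
lemma coprime_count (N : ℕ) :
    (11/36 : ℝ) * (N:ℝ)^2 ≤
      (((Finset.Ioc 0 N ×ˢ Finset.Ioc 0 N).filter (fun x => Nat.gcd x.1 x.2 = 1)).card : ℝ) := by
  classical
  set B := Finset.Ioc 0 N ×ˢ Finset.Ioc 0 N with hB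
  set D := B.filter (fun x => Nat.gcd x.1 x.2 = 1) with hD
  set Dc := B.filter (fun x => ¬ Nat.gcd x.1 x.2 = 1) with hDc
  have hsplit : D.card + Dc.card = B.card :=
    Finset.card_filter_add_card_filter_not _
  have hBcard : B.card = N^2 := by
    rw [hB, Finset.card_product, Nat.card_Ioc]; simp [sq]
  have hsub : Dc ⊆ (Finset.Icc 2 N).biUnion
      (fun d => ((Finset.Ioc 0 N).filter (fun x => d ∣ x)) ×ˢ
                ((Finset.Ioc 0 N).filter (fun x => d ∣ x))) := by
    intro x hx
    rw [hDc, Finset.mem_filter] at hx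
    obtain ⟨hxB, hgcd⟩ := hx
    rw [hB, Finset.mem_product, Finset.mem_Ioc, Finset.mem_Ioc] at hxB
    obtain ⟨⟨hx1, hx1N⟩, hx2, hx2N⟩ := hxB
    set g := Nat.gcd x.1 x.2 with hg
    have hg1 : g ∣ x.1 := Nat.gcd_dvd_left _ _
    have hg2 : g ∣ x.2 := Nat.gcd_dvd_right _ _
    have hgpos : 0 < g := Nat.gcd_pos_of_pos_left _ hx1
    have hgle : g ≤ x.1 := Nat.le_of_dvd hx1 hg1
    rw [Finset.mem_biUnion]
    refine ⟨g, ?_, ?_⟩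
    · rw [Finset.mem_Icc]; omega
    · rw [Finset.mem_product, Finset.mem_filter, Finset.mem_filter,
        Finset.mem_Ioc, Finset.mem_Ioc]
      exact ⟨⟨⟨hx1, hx1N⟩, hg1⟩, ⟨hx2, hx2N⟩, hg2⟩
  have hDcle : Dc.card ≤ ∑ d ∈ Finset.Icc 2 N, (N / d)^2 := by
    calc Dc.card ≤ _ := Finset.card_le_card hsub
    _ ≤ ∑ d ∈ Finset.Icc 2 N,
          (((Finset.Ioc 0 N).filter (fun x => d ∣ x)) ×ˢ
           ((Finset.Ioc 0 N).filter (fun x => d ∣ x))).card := Finset.card_biUnion_le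
    _ = ∑ d ∈ Finset.Icc 2 N, (N / d)^2 := by
        refine Finset.sum_congr rfl (fun d _ => ?_)
        rw [Finset.card_product, Nat.Ioc_filter_dvd_card_eq_div]; ring
  have hDcR : (Dc.card : ℝ) ≤ (25/36) * (N:ℝ)^2 := by
    have step1 : (Dc.card : ℝ) ≤ ∑ d ∈ Finset.Icc 2 N, ((N:ℝ) / (d:ℝ))^2 := by
      calc (Dc.card : ℝ) ≤ ((∑ d ∈ Finset.Icc 2 N, (N / d)^2 : ℕ) : ℝ) := by
            exact_mod_cast hDcle
      _ = ∑ d ∈ Finset.Icc 2 N, (((N / d : ℕ) : ℝ))^2 := by push_cast; ring_nf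
      _ ≤ ∑ d ∈ Finset.Icc 2 N, ((N:ℝ) / (d:ℝ))^2 := by
            refine Finset.sum_le_sum (fun d hd => ?_)
            have hd2 : 2 ≤ d := (Finset.mem_Icc.mp hd).1
            have h1 : ((N / d : ℕ) : ℝ) ≤ (N:ℝ) / (d:ℝ) := Nat.cast_div_le
            have h0 : (0:ℝ) ≤ ((N / d : ℕ) : ℝ) := by positivity
            nlinarith
    have step2 : ∑ d ∈ Finset.Icc 2 N, ((N:ℝ) / (d:ℝ))^2
        = (N:ℝ)^2 * ∑ d ∈ Finset.Icc 2 N, (1:ℝ)/(d:ℝ)^2 := by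
      rw [Finset.mul_sum]
      refine Finset.sum_congr rfl (fun d _ => ?_)
      rw [div_pow]; ring
    have step3 := sum_inv_sq_le N
    have hN2 : (0:ℝ) ≤ (N:ℝ)^2 := by positivity
    calc (Dc.card : ℝ) ≤ (N:ℝ)^2 * ∑ d ∈ Finset.Icc 2 N, (1:ℝ)/(d:ℝ)^2 := by
          rw [← step2]; exact step1
    _ ≤ (N:ℝ)^2 * (25/36) := by nlinarith
    _ = (25/36) * (N:ℝ)^2 := by ring
  have hcast : (D.card : ℝ) + (Dc.card : ℝ) = (N:ℝ)^2 := by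
    have : ((D.card + Dc.card : ℕ) : ℝ) = ((N^2 : ℕ) : ℝ) := by
      rw [hsplit, hBcard]
    push_cast at this; linarith
  linarith

end Stmt11Aux

open Stmt11Aux in
/-- the number of 2×2 integer matrices `[[a,b],[c,d]]` with `a + d = -1`,
`ad - bc = 1` and height at most `X` is at least `cX` for some absolute `c > 0`. -/
theorem stmt11 :
    ∃ c : ℝ, 0 < c ∧ ∀ X : ℝ, 2 ≤ X →
      c * X ≤ ({p : ℤ × ℤ × ℤ × ℤ |
          p.1 + p.2.2.2 = -1 ∧
          p.1 * p.2.2.2 - p.2.1 * p.2.2.1 = 1 ∧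
          (|p.1| : ℝ) ≤ X ∧ (|p.2.1| : ℝ) ≤ X ∧ (|p.2.2.1| : ℝ) ≤ X ∧
          (|p.2.2.2| : ℝ) ≤ X}.ncard : ℝ) := by
  classical
  refine ⟨1/1000, by norm_num, fun X hX => ?_⟩
  obtain ⟨S, hS⟩ : ∃ S' : Set (ℤ × ℤ × ℤ × ℤ), S' = {p : ℤ × ℤ × ℤ × ℤ |
          p.1 + p.2.2.2 = -1 ∧
          p.1 * p.2.2.2 - p.2.1 * p.2.2.1 = 1 ∧
          (|p.1| : ℝ) ≤ X ∧ (|p.2.1| : ℝ) ≤ X ∧ (|p.2.2.1| : ℝ) ≤ X ∧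
          (|p.2.2.2| : ℝ) ≤ X} := ⟨_, rfl⟩
  rw [← hS]
  -- S is finite
  have hXpos : (0:ℝ) < X := by linarith
  obtain ⟨M, hM⟩ : ∃ M' : ℤ, M' = ⌈X⌉ := ⟨_, rfl⟩
  have habs : ∀ z : ℤ, |(z : ℝ)| ≤ X → -M ≤ z ∧ z ≤ M := by
    intro z hz
    have h1 : ((|z| : ℤ) : ℝ) ≤ (M : ℝ) := by
      rw [Int.cast_abs, hM]; exact le_trans hz (Int.le_ceil X)
    have h2 : |z| ≤ M := by exact_mod_cast h1
    exact abs_le.mp h2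
  have hfin : S.Finite := by
    apply Set.Finite.subset (Set.finite_Icc ((-M, -M, -M, -M) : ℤ × ℤ × ℤ × ℤ) (M, M, M, M))
    rintro ⟨a, b, c, d⟩ hmem
    rw [hS] at hmem
    obtain ⟨_, _, ha, hb, hc, hd⟩ := hmem
    obtain ⟨ha1, ha2⟩ := habs a ha
    obtain ⟨hb1, hb2⟩ := habs b hb
    obtain ⟨hc1, hc2⟩ := habs c hc
    obtain ⟨hd1, hd2⟩ := habs d hd
    constructor <;> exact ⟨by assumption, by assumption, by assumption, by assumption⟩
  by_cases hsmall : X ≤ 1000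
  · -- small case: S is nonempty
    have hmem : ((0 : ℤ), (-1 : ℤ), (1 : ℤ), (-1 : ℤ)) ∈ S := by
      rw [hS]
      refine ⟨by norm_num, by norm_num, ?_, ?_, ?_, ?_⟩ <;> simp <;> linarith
    have h1 : 1 ≤ S.ncard := (Set.ncard_pos hfin).mpr ⟨_, hmem⟩
    have h1' : (1:ℝ) ≤ (S.ncard : ℝ) := by exact_mod_cast h1
    nlinarith
  · push_neg at hsmall
    obtain ⟨t, ht⟩ : ∃ t' : ℝ, t' = Real.sqrt (X/3) := ⟨_, rfl⟩
    obtain ⟨N, hN⟩ : ∃ N' : ℕ, N' = ⌊t⌋₊ := ⟨_, rfl⟩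
    have ht0 : 0 ≤ t := ht ▸ Real.sqrt_nonneg _
    have ht2 : t^2 = X/3 := by rw [ht]; exact Real.sq_sqrt (by linarith)
    have ht18 : 18 ≤ t := by nlinarith
    have hNt : (N:ℝ) ≤ t := by rw [hN]; exact Nat.floor_le ht0
    have hNt1 : t - 1 < (N:ℝ) := by
      have := Nat.lt_floor_add_one t; rw [hN]; push_cast; linarith
    have h3N : 3 * (N:ℝ)^2 ≤ X := by nlinarith
    -- the injection domain
    obtain ⟨D, hD⟩ : ∃ D' : Finset (ℕ × ℕ), D' = ((Finset.Ioc 0 N ×ˢ Finset.Ioc 0 N).filter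
        (fun x => Nat.gcd x.1 x.2 = 1)) := ⟨_, rfl⟩
    -- membership
    have hmemD : ∀ x ∈ D, F x ∈ S := by
      rintro ⟨r, s⟩ hx
      rw [hD, Finset.mem_filter, Finset.mem_product, Finset.mem_Ioc, Finset.mem_Ioc] at hx
      obtain ⟨⟨⟨hr0, hrN⟩, hs0, hsN⟩, hgcd⟩ := hx
      have hrz : (1:ℤ) ≤ (r:ℤ) := by exact_mod_cast hr0
      have hsz : (1:ℤ) ≤ (s:ℤ) := by exact_mod_cast hs0
      have hrzN : (r:ℤ) ≤ (N:ℤ) := by exact_mod_cast hrN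
      have hszN : (s:ℤ) ≤ (N:ℤ) := by exact_mod_cast hsN
      have hgz : Int.gcd (r:ℤ) (s:ℤ) = 1 := by
        rw [Int.gcd_natCast_natCast]; exact hgcd
      obtain ⟨hbez, hp1, hpr, hq0, hqs⟩ := pq_spec (r:ℤ) (s:ℤ) hrz hsz hgz
      rw [hS, Set.mem_setOf_eq]
      simp only [F]
      obtain ⟨p, hp⟩ : ∃ p' : ℤ, p' = pp (r:ℤ) (s:ℤ) := ⟨_, rfl⟩
      obtain ⟨q, hq⟩ : ∃ q' : ℤ, q' = qq (r:ℤ) (s:ℤ) := ⟨_, rfl⟩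
      rw [← hp] at hp1 hpr
      rw [← hq] at hq0 hqs
      rw [← hp, ← hq] at hbez ⊢
      have hb3 : ∀ z : ℤ, 0 ≤ z → z ≤ 3*(N:ℤ)^2 → |(z : ℝ)| ≤ X := by
        intro z hz1 hz2
        have hz1' : (0:ℝ) ≤ (z:ℝ) := by exact_mod_cast hz1
        rw [abs_of_nonneg hz1']
        have : (z:ℝ) ≤ 3*(N:ℝ)^2 := by exact_mod_cast hz2
        linarith
      clear hp hq
      have hp0 : (0:ℤ) ≤ p := by linarith
      have hq0' : (0:ℤ) ≤ q := hq0
      have hr0' : (0:ℤ) ≤ (r:ℤ) := by linarith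
      have hs0' : (0:ℤ) ≤ (s:ℤ) := by linarith
      have hN0 : (0:ℤ) ≤ (N:ℤ) := by linarith
      have hpN : p ≤ (N:ℤ) := le_trans hpr hrzN
      have hqN : q ≤ (N:ℤ) := by linarith
      have m1 : p*(r:ℤ) ≤ (N:ℤ)*(N:ℤ) := mul_le_mul hpN hrzN hr0' hN0
      have m2 : q*(r:ℤ) ≤ (N:ℤ)*(N:ℤ) := mul_le_mul hqN hrzN hr0' hN0
      have m3 : q*(s:ℤ) ≤ (N:ℤ)*(N:ℤ) := mul_le_mul hqN hszN hs0' hN0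
      have m4 : p*p ≤ (N:ℤ)*(N:ℤ) := mul_le_mul hpN hpN hp0 hN0
      have m5 : p*q ≤ (N:ℤ)*(N:ℤ) := mul_le_mul hpN hqN hq0' hN0
      have m6 : q*q ≤ (N:ℤ)*(N:ℤ) := mul_le_mul hqN hqN hq0' hN0
      have m7 : (r:ℤ)*(r:ℤ) ≤ (N:ℤ)*(N:ℤ) := mul_le_mul hrzN hrzN hr0' hN0
      have m8 : (r:ℤ)*(s:ℤ) ≤ (N:ℤ)*(N:ℤ) := mul_le_mul hrzN hszN hs0' hN0
      have m9 : (s:ℤ)*(s:ℤ) ≤ (N:ℤ)*(N:ℤ) := mul_le_mul hszN hszN hs0' hN0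
      have m10 : p*(s:ℤ) ≤ (N:ℤ)*(N:ℤ) := mul_le_mul hpN hszN hs0' hN0
      have n1 : (0:ℤ) ≤ p*(r:ℤ) := mul_nonneg hp0 hr0'
      have n2 : (0:ℤ) ≤ q*(r:ℤ) := mul_nonneg hq0' hr0'
      have n3 : (0:ℤ) ≤ q*(s:ℤ) := mul_nonneg hq0' hs0'
      have n4 : (0:ℤ) ≤ p*p := mul_nonneg hp0 hp0
      have n5 : (0:ℤ) ≤ p*q := mul_nonneg hp0 hq0'
      have n6 : (0:ℤ) ≤ q*q := mul_nonneg hq0' hq0'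
      have n7 : (0:ℤ) ≤ (r:ℤ)*(r:ℤ) := mul_nonneg hr0' hr0'
      have n8 : (0:ℤ) ≤ (r:ℤ)*(s:ℤ) := mul_nonneg hr0' hs0'
      have n9 : (0:ℤ) ≤ (s:ℤ)*(s:ℤ) := mul_nonneg hs0' hs0'
      have n10 : (0:ℤ) ≤ p*(s:ℤ) := mul_nonneg hp0 hs0'
      have hNN : (N:ℤ)*(N:ℤ) = (N:ℤ)^2 := by ring
      have ha1 : (0:ℤ) ≤ p*(r:ℤ) + q*(r:ℤ) + q*(s:ℤ) := by linarith
      have ha2 : p*(r:ℤ) + q*(r:ℤ) + q*(s:ℤ) ≤ 3*(N:ℤ)^2 := by linarith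
      have hb1 : (0:ℤ) ≤ p*p + p*q + q*q := by linarith
      have hb2 : p*p + p*q + q*q ≤ 3*(N:ℤ)^2 := by linarith
      have hc1 : (0:ℤ) ≤ (r:ℤ)*(r:ℤ) + (r:ℤ)*(s:ℤ) + (s:ℤ)*(s:ℤ) := by linarith
      have hc2 : (r:ℤ)*(r:ℤ) + (r:ℤ)*(s:ℤ) + (s:ℤ)*(s:ℤ) ≤ 3*(N:ℤ)^2 := by linarith
      have hd1 : (0:ℤ) ≤ p*(r:ℤ) + p*(s:ℤ) + q*(s:ℤ) := by linarith
      have hd2 : p*(r:ℤ) + p*(s:ℤ) + q*(s:ℤ) ≤ 3*(N:ℤ)^2 := by linarith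
      refine ⟨?_, ?_, ?_, ?_, ?_, ?_⟩
      · linear_combination (-1 : ℤ) * hbez
      · linear_combination (p*(s:ℤ) - q*(r:ℤ) + 1) * hbez
      · exact hb3 _ ha1 ha2
      · rw [Int.cast_neg, abs_neg]; exact hb3 _ hb1 hb2
      · exact hb3 _ hc1 hc2
      · rw [Int.cast_neg, abs_neg]; exact hb3 _ hd1 hd2
    -- injectivity
    have hinj : Set.InjOn F ↑D := by
      rintro ⟨r1, s1⟩ hx1 ⟨r2, s2⟩ hx2 heq
      simp only [hD, Finset.coe_filter, Set.mem_setOf_eq, Finset.mem_product,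
        Finset.mem_Ioc] at hx1 hx2
      obtain ⟨⟨⟨hr10, _⟩, hs10, _⟩, hg1⟩ := hx1
      obtain ⟨⟨⟨hr20, _⟩, hs20, _⟩, hg2⟩ := hx2
      have hr1z : (1:ℤ) ≤ (r1:ℤ) := by exact_mod_cast hr10
      have hs1z : (1:ℤ) ≤ (s1:ℤ) := by exact_mod_cast hs10
      have hr2z : (1:ℤ) ≤ (r2:ℤ) := by exact_mod_cast hr20
      have hs2z : (1:ℤ) ≤ (s2:ℤ) := by exact_mod_cast hs20
      have hg1z : Int.gcd (r1:ℤ) (s1:ℤ) = 1 := by rw [Int.gcd_natCast_natCast]; exact hg1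
      have hg2z : Int.gcd (r2:ℤ) (s2:ℤ) = 1 := by rw [Int.gcd_natCast_natCast]; exact hg2
      obtain ⟨hbez1, _, _, _, _⟩ := pq_spec (r1:ℤ) (s1:ℤ) hr1z hs1z hg1z
      obtain ⟨hbez2, _, _, _, _⟩ := pq_spec (r2:ℤ) (s2:ℤ) hr2z hs2z hg2z
      have h4 := heq
      simp only [F, Prod.mk.injEq] at h4
      obtain ⟨p1, hpe1⟩ : ∃ p' : ℤ, p' = pp (r1:ℤ) (s1:ℤ) := ⟨_, rfl⟩
      obtain ⟨q1, hqe1⟩ : ∃ q' : ℤ, q' = qq (r1:ℤ) (s1:ℤ) := ⟨_, rfl⟩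
      obtain ⟨p2, hpe2⟩ : ∃ p' : ℤ, p' = pp (r2:ℤ) (s2:ℤ) := ⟨_, rfl⟩
      obtain ⟨q2, hqe2⟩ : ∃ q' : ℤ, q' = qq (r2:ℤ) (s2:ℤ) := ⟨_, rfl⟩
      rw [← hpe1, ← hqe1] at hbez1 h4
      rw [← hpe2, ← hqe2] at hbez2 h4
      obtain ⟨ha, hb, hc, hd⟩ := h4
      have := inj_aux hbez1 hbez2 hr1z hs1z hr2z hs2z ha hb hc hd
      obtain ⟨hr, hs⟩ := this
      have hr' : r1 = r2 := by exact_mod_cast hr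
      have hs' : s1 = s2 := by exact_mod_cast hs
      simp [hr', hs']
    -- counting
    have himg : F '' ↑D ⊆ S := by
      rintro y ⟨x, hx, rfl⟩
      exact hmemD x (by exact_mod_cast hx)
    have hcard1 : (F '' ↑D).ncard = D.card := by
      rw [Set.ncard_image_of_injOn hinj, Set.ncard_coe_finset]
    have hcard2 : D.card ≤ S.ncard := by
      rw [← hcard1]
      exact Set.ncard_le_ncard himg hfin
    have hcount := coprime_count N
    rw [← hD] at hcount
    have hchain : (11/36 : ℝ) * (N:ℝ)^2 ≤ (S.ncard : ℝ) := by
      calc (11/36 : ℝ) * (N:ℝ)^2 ≤ (D.card : ℝ) := hcount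
      _ ≤ (S.ncard : ℝ) := by exact_mod_cast hcard2
    -- numeric finish: N > t - 1, t ≥ 18, t² = X/3
    have hNsq : ((t-1))^2 ≤ (N:ℝ)^2 := by nlinarith
    have hfinal : (1/1000 : ℝ) * X ≤ (11/36 : ℝ) * (N:ℝ)^2 := by nlinarith
    linarith
end
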